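/- arXiv:1312.5463 — 4 statements merged into one kernel-verified Lean document; each statement's English description precedes it below -/
import Mathlib

section
/- Let N ≥ 3, ε > 0, γ, β ∈ ℝ, let U : ℝ^N → ℝ be C¹ with U, |∇U| and |x|U(x) in L²(ℝ^N), let σ = (a,ξ,θ) ∈ ℝ^N×ℝ^N×ℝ, and let w ∈ L²(ℝ^N, ℂ). Define w̃(x) := ε^{−γ} e^{−(i/ε)((1/2)ε^β x·ξ + θ)} w(a + ε^β x). Then: (i) for j = 1,…,N, ω(w, z^ε_{j,σ}) = ε^{2γ+β(N−1)} ω(w̃, z_{j,0}) − (1/2) ε^{2γ+βN−1} ξ_j ω(w̃, z_{2N+1,0}); (ii) for j = N+1,…,2N, ω(w, z^ε_{j,σ}) = ε^{2γ+β(N+1)−1} ω(w̃, z_{j,0}) + (1/2) ε^{2γ+βN−1} a_{j−N} ω(w̃, z_{2N+1,0}); (iii) ω(w, z^ε_{2N+1,σ}) = ε^{2γ+βN−1} ω(w̃, z_{2N+1,0}). -/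
open MeasureTheory Real Filter
open scoped BigOperators ENNReal

noncomputable section

/-- Euclidean space `ℝ^N`. -/
abbrev Esp (N : ℕ) := EuclideanSpace ℝ (Fin N)

namespace NLS

variable {N : ℕ}

/-- partial derivative in the `j`-th coordinate direction (real valued). -/
def pd (j : Fin N) (g : Esp N → ℝ) (x : Esp N) : ℝ :=
  fderiv ℝ g x (EuclideanSpace.single j 1)

/-- partial derivative in the `j`-th coordinate direction (complex valued). -/
def pdC (j : Fin N) (g : Esp N → ℂ) (x : Esp N) : ℂ :=
  fderiv ℝ g x (EuclideanSpace.single j 1)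

/-- Laplacian of a real valued function. -/
def lapR (g : Esp N → ℝ) (x : Esp N) : ℝ := ∑ j, pd j (pd j g) x

/-- Laplacian of a complex valued function. -/
def lapC (g : Esp N → ℂ) (x : Esp N) : ℂ := ∑ j, pdC j (pdC j g) x

/-- gradient of a real valued function, as a vector of `ℝ^N`. -/
def grad (g : Esp N → ℝ) (x : Esp N) : Esp N :=
  (EuclideanSpace.equiv (Fin N) ℝ).symm fun j => pd j g x

/-- the symplectic pairing `ω(f,g) = Im ∫ f · conj g`. -/
def symp (f g : Esp N → ℂ) : ℝ := (∫ x, f x * (starRingEnd ℂ) (g x)).im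

/-- `L²` norm of a complex valued function. -/
def l2 (f : Esp N → ℂ) : ℝ := Real.sqrt (∫ x, ‖f x‖ ^ 2)

/-- `L²` norm of a real valued function. -/
def l2R (f : Esp N → ℝ) : ℝ := Real.sqrt (∫ x, f x ^ 2)

/-- the phase factor of the solitary wave. -/
def phase (ε : ℝ) (a ξ : Esp N) (θ : ℝ) (x : Esp N) : ℂ :=
  Complex.exp (Complex.I / (ε : ℂ) * ((1 / 2 * (inner ℝ (x - a) ξ : ℝ) + θ : ℝ) : ℂ))

/-- the solitary wave `U_σ`, `σ = (a, ξ, θ)`. -/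
def solWave (ε γ β : ℝ) (U : Esp N → ℝ) (a ξ : Esp N) (θ : ℝ) (x : Esp N) : ℂ :=
  ((ε ^ γ * U (ε ^ (-β) • (x - a)) : ℝ) : ℂ) * phase ε a ξ θ x

/-- tangent vectors `z^ε_{j,σ}`, `j = 1,…,N`. -/
def zA (ε γ β : ℝ) (U : Esp N → ℝ) (a ξ : Esp N) (θ : ℝ) (j : Fin N) (x : Esp N) : ℂ :=
  -(((ε ^ (γ - β) * pd j U (ε ^ (-β) • (x - a)) : ℝ) : ℂ)
      + Complex.I * ((ε ^ (γ - 1) / 2 * ξ j * U (ε ^ (-β) • (x - a)) : ℝ) : ℂ))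
    * phase ε a ξ θ x

/-- tangent vectors `z^ε_{N+j,σ}`, `j = 1,…,N`. -/
def zXi (ε γ β : ℝ) (U : Esp N → ℝ) (a ξ : Esp N) (θ : ℝ) (j : Fin N) (x : Esp N) : ℂ :=
  Complex.I / (2 * (ε : ℂ)) * ((x j : ℝ) : ℂ) * solWave ε γ β U a ξ θ x

/-- tangent vector `z^ε_{2N+1,σ}`. -/
def zTh (ε γ β : ℝ) (U : Esp N → ℝ) (a ξ : Esp N) (θ : ℝ) (x : Esp N) : ℂ :=
  Complex.I / (ε : ℂ) * solWave ε γ β U a ξ θ x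

/-- rescaled tangent vectors `z_{j,0}`, `j = 1,…,N`. -/
def zA0 (U : Esp N → ℝ) (j : Fin N) (x : Esp N) : ℂ := -((pd j U x : ℝ) : ℂ)

/-- rescaled tangent vectors `z_{N+j,0}`, `j = 1,…,N`. -/
def zXi0 (U : Esp N → ℝ) (j : Fin N) (x : Esp N) : ℂ :=
  Complex.I / 2 * ((x j : ℝ) : ℂ) * ((U x : ℝ) : ℂ)

/-- rescaled tangent vector `z_{2N+1,0}`. -/
def zTh0 (U : Esp N → ℝ) (x : Esp N) : ℂ := Complex.I * ((U x : ℝ) : ℂ)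

/-- `w(t,x) = e^{iω_ε(t)/ε} ψ(t,x) − U_{σ(t)}(x)`. -/
def wfun (ε γ β : ℝ) (U : Esp N → ℝ) (a ξ : ℝ → Esp N) (θf ωf : ℝ → ℝ)
    (ψ : ℝ → Esp N → ℂ) (t : ℝ) (x : Esp N) : ℂ :=
  Complex.exp (Complex.I / (ε : ℂ) * ((ωf t : ℝ) : ℂ)) * ψ t x
    - solWave ε γ β U (a t) (ξ t) (θf t) x

/-- the gauge twist turning `w` into `w̃`. -/
def twist (ε γ β : ℝ) (a ξ : Esp N) (θ : ℝ) (w : Esp N → ℂ) (x : Esp N) : ℂ :=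
  ((ε ^ (-γ) : ℝ) : ℂ)
    * Complex.exp (-(Complex.I / (ε : ℂ)) * ((1 / 2 * (ε ^ β * (inner ℝ x ξ : ℝ)) + θ : ℝ) : ℂ))
    * w (a + (ε ^ β : ℝ) • x)

/-- `w̃(t,x)`, the distance from the solitary wave in the fixed frame. -/
def wtil (ε γ β : ℝ) (U : Esp N → ℝ) (a ξ : ℝ → Esp N) (θf ωf : ℝ → ℝ)
    (ψ : ℝ → Esp N → ℂ) (t : ℝ) (x : Esp N) : ℂ :=
  twist ε γ β (a t) (ξ t) (θf t) (wfun ε γ β U a ξ θf ωf ψ t) x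

/-- the averaged force discrepancy `v(t)`. -/
def vfun (ε β ρ : ℝ) (U V : Esp N → ℝ) (a : ℝ → Esp N) (t : ℝ) : Esp N :=
  (1 / ρ) • ∫ x, U x ^ 2 • (grad V (a t + (ε ^ β : ℝ) • x) - grad V (a t))

/-- the Taylor remainder `R_V(t,x)` of the potential. -/
def RVfun (ε β : ℝ) (V : Esp N → ℝ) (a : ℝ → Esp N) (t : ℝ) (x : Esp N) : ℝ :=
  V (a t + (ε ^ β : ℝ) • x) - V (a t) - ε ^ β * (inner ℝ x (grad V (a t)) : ℝ)

/-- the nonlinear remainder `R_F`; with `w = v` it is also the integrand of condition (N2). -/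
def RFfun (f : ℝ → ℝ) (U : Esp N → ℝ) (w : Esp N → ℂ) (x : Esp N) : ℂ :=
  ((f (‖((U x : ℝ) : ℂ) + w x‖ ^ 2) : ℝ) : ℂ) * (((U x : ℝ) : ℂ) + w x)
    - ((f (U x ^ 2) * U x : ℝ) : ℂ)
    - ((2 * deriv f (U x ^ 2) * U x ^ 2 + f (U x ^ 2) : ℝ) : ℂ) * (((w x).re : ℝ) : ℂ)
    - Complex.I * ((f (U x ^ 2) : ℝ) : ℂ) * (((w x).im : ℝ) : ℂ)

/-- condition (N2) with constant `C` and test function `φ`. -/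
def IsN2Const (f : ℝ → ℝ) (U : Esp N → ℝ) (φ : Esp N → ℂ) (C : ℝ) : Prop :=
  0 < C ∧ ∀ v : SchwartzMap (Esp N) ℂ, l2 ⇑v ≤ 1 →
    ‖∫ x, RFfun f U (⇑v) x * (starRingEnd ℂ) (φ x)‖ ≤ C * l2 ⇑v

/-- the nonlinear Schrödinger equation of problem `(P_ε)` at `(t,x)`. -/
def NLSeq (ε α : ℝ) (f : ℝ → ℝ) (V : Esp N → ℝ) (ψ : ℝ → Esp N → ℂ) (t : ℝ) (x : Esp N) :
    Prop :=
  Complex.I * (ε : ℂ) * deriv (fun s => ψ s x) t + (ε : ℂ) ^ 2 * lapC (ψ t) x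
      - ((f (ε ^ (-(2 * α)) * ‖ψ t x‖ ^ 2) : ℝ) : ℂ) * ψ t x
    = ((V x : ℝ) : ℂ) * ψ t x

/-- the effective trajectory system for `σ(t) = (a(t), ξ(t), θ(t))`. -/
def Traj (ε β ρ : ℝ) (U V : Esp N → ℝ) (a ξ : ℝ → Esp N) (θf : ℝ → ℝ) : Prop :=
  (∀ t, Integrable fun x : Esp N => U x ^ 2 • grad V (a t + (ε ^ β : ℝ) • x)) ∧
  (∀ t, HasDerivAt a (ξ t) t) ∧
  (∀ t, HasDerivAt ξ (-((2 / ρ) • ∫ x, U x ^ 2 • grad V (a t + (ε ^ β : ℝ) • x))) t) ∧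
  (∀ t, HasDerivAt θf 0 t)

/-- the Cauchy problem for the phase correction `ω_ε`. -/
def OmEq (ε β ω : ℝ) (V : Esp N → ℝ) (a ξ : ℝ → Esp N) (ωf : ℝ → ℝ) : Prop :=
  ωf 0 = 0 ∧ ∀ t, HasDerivAt ωf (ε ^ (2 - 2 * β) * ω - 1 / 4 * ‖ξ t‖ ^ 2 + V (a t)) t

/-- the standing hypotheses on the nonlinearity `f` and the profile `U`:
`f` is continuous on `[0,∞)`, `C¹` on `(0,∞)` and homogeneous of degree `p`;
`U` is positive, solves the elliptic equation `−ΔU + f(U²)U − ωU = 0`, has mass `ρ > 0`,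
and `f(U²)`, `f'(U²)U²` are bounded. -/
def Setup (p ω ρ : ℝ) (f : ℝ → ℝ) (U : Esp N → ℝ) : Prop :=
  ContinuousOn f (Set.Ici 0) ∧ ContDiffOn ℝ 1 f (Set.Ioi 0) ∧
  (∀ lam > (0:ℝ), ∀ s > (0:ℝ), f (lam * s) = lam ^ p * f s) ∧
  (∀ x, 0 < U x) ∧
  (∀ x, -lapR U x + f (U x ^ 2) * U x - ω * U x = 0) ∧
  (∫ x, U x ^ 2) = ρ ∧ 0 < ρ ∧
  (∃ M, ∀ x, |f (U x ^ 2)| ≤ M ∧ |deriv f (U x ^ 2) * U x ^ 2| ≤ M)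

/-- `g` agrees with a Schwartz function. -/
def IsSchwartz (g : Esp N → ℂ) : Prop := ∃ G : SchwartzMap (Esp N) ℂ, ∀ x, G x = g x

/-- condition (Vr): regular potential, bounded below, with bounded second derivatives. -/
def Vr (V : Esp N → ℝ) : Prop :=
  ContDiff ℝ 2 V ∧ BddBelow (Set.range V) ∧
  ∃ h : ℝ, ∀ (x : Esp N) (i j : Fin N),
    |fderiv ℝ (pd i V) x (EuclideanSpace.single j 1)| ≤ h

/-- condition (Vs): potential with a power-like singularity at the origin. -/
def Vs (V : Esp N → ℝ) : Prop :=
  (∀ x : Esp N, x ≠ 0 → ContDiffAt ℝ 2 V x) ∧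
  (∃ ζ : ℝ, 0 < ζ ∧ ζ < 2 ∧ ∃ c₁ > (0:ℝ), ∃ c₂ > (0:ℝ),
    ∀ x : Esp N, x ≠ 0 → ‖x‖ ≤ 1 →
      |V x| ≤ c₁ * ‖x‖ ^ (-ζ) ∧ ‖grad V x‖ ≤ c₂ * ‖x‖ ^ (-ζ - 1)) ∧
  (∃ m : ℝ, (N : ℝ) / 2 < m ∧
    MemLp V (ENNReal.ofReal m) (volume.restrict {x : Esp N | 1 ≤ ‖x‖})) ∧
  Tendsto (fun x : Esp N => ‖grad V x‖) (cocompact (Esp N)) (nhds 0)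

section Aux

variable {ε γ β : ℝ} {U : Esp N → ℝ} {a ξ : Esp N} {θ : ℝ} {w : Esp N → ℂ}

private theorem cov' (hε : 0 < ε) (f : Esp N → ℂ) :
    ∫ x, f x = ((ε ^ (β * (N : ℝ)) : ℝ) : ℂ) * ∫ y, f (a + (ε ^ β : ℝ) • y) := by
  have h1 : ∫ y, f (a + (ε ^ β : ℝ) • y) =
      |((ε ^ β) ^ (Module.finrank ℝ (Esp N)))⁻¹| • ∫ z, f (a + z) :=
    MeasureTheory.Measure.integral_comp_smul volume (fun z => f (a + z)) (ε ^ β)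
  have h2 : ∫ z, f (a + z) = ∫ x, f x := integral_add_left_eq_self f a
  have h3 : |((ε ^ β) ^ (Module.finrank ℝ (Esp N)))⁻¹| = ε ^ (-(β * (N : ℝ))) := by
    rw [finrank_euclideanSpace_fin, abs_of_pos
        (by positivity : (0:ℝ) < ((ε ^ β) ^ N)⁻¹),
      ← Real.rpow_natCast (ε ^ β) N, ← Real.rpow_mul hε.le, ← Real.rpow_neg hε.le]
  rw [h1, h2, h3, Complex.real_smul, ← mul_assoc, ← Complex.ofReal_mul,
    ← Real.rpow_add hε, add_neg_cancel, Real.rpow_zero, Complex.ofReal_one, one_mul]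

private theorem wcomp_memLp (hε : 0 < ε) (hw : MemLp w 2 volume) :
    MemLp (fun y : Esp N => w (a + (ε ^ β : ℝ) • y)) 2 volume := by
  have hc : (ε ^ β : ℝ) ≠ 0 := (Real.rpow_pos_of_pos hε β).ne'
  set S : Esp N → Esp N := fun y => a + (ε ^ β : ℝ) • y with hSdef
  have hmeas : Measurable S := (measurable_const_smul _).const_add _
  have hmap : Measure.map S volume
      = ENNReal.ofReal |((ε ^ β) ^ (Module.finrank ℝ (Esp N)))⁻¹| • volume := by
    have h : S = (fun z : Esp N => a + z) ∘ (fun y : Esp N => (ε ^ β : ℝ) • y) := rfl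
    rw [h, ← Measure.map_map (measurable_const_add a) (measurable_const_smul _),
      Measure.map_addHaar_smul volume hc, Measure.map_smul, map_add_left_eq_self]
  have hw2 : MemLp w 2 (Measure.map S volume) := by
    rw [hmap]; exact hw.smul_measure ENNReal.ofReal_ne_top
  exact hw2.comp_measurePreserving ⟨hmeas, rfl⟩

private theorem norm_exp_unim (ε s : ℝ) :
    ‖Complex.exp (-(Complex.I / (ε : ℂ)) * (s : ℂ))‖ = 1 := by
  rw [Complex.norm_exp]
  have h : (-(Complex.I / (ε : ℂ)) * (s : ℂ)).re = 0 := by simp [Complex.div_re]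
  rw [h, Real.exp_zero]

private theorem twist_memLp (hε : 0 < ε) (hw : MemLp w 2 volume) :
    MemLp (twist ε γ β a ξ θ w) 2 volume := by
  have hwS := wcomp_memLp (a := a) (β := β) hε hw
  refine MemLp.of_le_mul (c := ε ^ (-γ)) hwS ?_ ?_
  · have hcont : Continuous fun x : Esp N =>
        ((ε ^ (-γ) : ℝ) : ℂ) * Complex.exp
          (-(Complex.I / (ε : ℂ)) * ((1 / 2 * (ε ^ β * (inner ℝ x ξ : ℝ)) + θ : ℝ) : ℂ)) := by
      refine continuous_const.mul (Complex.continuous_exp.comp (continuous_const.mul ?_))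
      exact Complex.continuous_ofReal.comp
        ((continuous_const.mul (continuous_const.mul
          (continuous_id.inner continuous_const))).add continuous_const)
    exact hcont.aestronglyMeasurable.mul hwS.aestronglyMeasurable
  · refine Eventually.of_forall fun x => le_of_eq ?_
    rw [twist, norm_mul, norm_mul, norm_exp_unim, mul_one, Complex.norm_real,
      Real.norm_eq_abs, abs_of_pos (Real.rpow_pos_of_pos hε _)]

private theorem mulInt {f g : Esp N → ℂ} (hf : MemLp f 2 volume) (hg : MemLp g 2 volume) :
    Integrable (fun x => f x * g x) volume := by
  have h : MemLp (f • g) 1 volume := MemLp.smul (φ := f) (r := 1) hg hf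
  rw [memLp_one_iff_integrable] at h
  exact h

private theorem conjLp {g : Esp N → ℂ} (hg : MemLp g 2 volume) :
    MemLp (fun x => (starRingEnd ℂ) (g x)) 2 volume := by
  refine MemLp.of_le hg
    (RCLike.continuous_conj.comp_aestronglyMeasurable hg.aestronglyMeasurable) ?_
  exact Eventually.of_forall fun x => by rw [RCLike.norm_conj]

private theorem coord_le_norm (g : Esp N) (j : Fin N) : |g j| ≤ ‖g‖ := by
  have h : (inner ℝ (EuclideanSpace.single j (1:ℝ)) g : ℝ) = g j := by
    rw [EuclideanSpace.inner_single_left]; simp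
  calc |g j| = |(inner ℝ (EuclideanSpace.single j (1:ℝ)) g : ℝ)| := by rw [h]
  _ ≤ ‖EuclideanSpace.single j (1:ℝ)‖ * ‖g‖ := abs_real_inner_le_norm _ _
  _ = ‖g‖ := by rw [EuclideanSpace.norm_single]; simp

private theorem hres (hε : 0 < ε) (y : Esp N) :
    (ε ^ (-β) : ℝ) • ((a + (ε ^ β : ℝ) • y) - a) = y := by
  rw [add_sub_cancel_left, smul_smul, ← Real.rpow_add hε, neg_add_cancel,
    Real.rpow_zero, one_smul]

private theorem twist_apply (y : Esp N) :
    twist ε γ β a ξ θ w y = ((ε ^ (-γ) : ℝ) : ℂ)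
      * (starRingEnd ℂ) (phase ε a ξ θ (a + (ε ^ β : ℝ) • y))
      * w (a + (ε ^ β : ℝ) • y) := by
  rw [twist, phase, add_sub_cancel_left, real_inner_smul_left, ← Complex.exp_conj]
  congr 3
  simp only [map_mul, map_div₀, Complex.conj_I, Complex.conj_ofReal]
  ring

private theorem ptTh (hε : 0 < ε) (y : Esp N) :
    w (a + (ε ^ β : ℝ) • y) * (starRingEnd ℂ) (zTh ε γ β U a ξ θ (a + (ε ^ β : ℝ) • y))
      = ((ε ^ (2 * γ - 1) : ℝ) : ℂ) * (twist ε γ β a ξ θ w y * (starRingEnd ℂ) (zTh0 U y)) := by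
  have e : ε ^ γ * ε⁻¹ = ε ^ (2 * γ - 1) * ε ^ (-γ) := by
    rw [← Real.rpow_neg_one ε, ← Real.rpow_add hε, ← Real.rpow_add hε]; congr 1; ring
  have ec : ((ε ^ γ : ℝ) : ℂ) * ((ε : ℝ) : ℂ)⁻¹
      = ((ε ^ (2 * γ - 1) : ℝ) : ℂ) * ((ε ^ (-γ) : ℝ) : ℂ) := by
    have h := congrArg (Complex.ofReal) e; push_cast at h; exact h
  rw [zTh, solWave, hres hε y, twist_apply, zTh0]
  simp only [map_mul, map_div₀, Complex.conj_I, Complex.conj_ofReal]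
  push_cast
  linear_combination (-(w (a + (ε ^ β : ℝ) • y))
    * (starRingEnd ℂ) (phase ε a ξ θ (a + (ε ^ β : ℝ) • y)) * Complex.I * ((U y : ℝ) : ℂ)) * ec

private theorem ptA (hε : 0 < ε) (j : Fin N) (y : Esp N) :
    w (a + (ε ^ β : ℝ) • y) * (starRingEnd ℂ) (zA ε γ β U a ξ θ j (a + (ε ^ β : ℝ) • y))
      = ((ε ^ (2 * γ - β) : ℝ) : ℂ) * (twist ε γ β a ξ θ w y * (starRingEnd ℂ) (zA0 U j y))
        - ((1 / 2 * ε ^ (2 * γ - 1) * ξ j : ℝ) : ℂ)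
          * (twist ε γ β a ξ θ w y * (starRingEnd ℂ) (zTh0 U y)) := by
  have e1 : ε ^ (γ - β) = ε ^ (2 * γ - β) * ε ^ (-γ) := by
    rw [← Real.rpow_add hε]; congr 1; ring
  have e2 : ε ^ (γ - 1) = ε ^ (2 * γ - 1) * ε ^ (-γ) := by
    rw [← Real.rpow_add hε]; congr 1; ring
  have ec1 : ((ε ^ (γ - β) : ℝ) : ℂ) = ((ε ^ (2 * γ - β) : ℝ) : ℂ) * ((ε ^ (-γ) : ℝ) : ℂ) := by
    have h := congrArg (Complex.ofReal) e1; push_cast at h; exact_mod_cast h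
  have ec2 : ((ε ^ (γ - 1) : ℝ) : ℂ) = ((ε ^ (2 * γ - 1) : ℝ) : ℂ) * ((ε ^ (-γ) : ℝ) : ℂ) := by
    have h := congrArg (Complex.ofReal) e2; push_cast at h; exact_mod_cast h
  rw [zA, hres hε y, twist_apply, zA0, zTh0]
  simp only [map_mul, map_neg, map_add, map_div₀, Complex.conj_I, Complex.conj_ofReal]
  push_cast
  linear_combination (-(w (a + (ε ^ β : ℝ) • y))
      * (starRingEnd ℂ) (phase ε a ξ θ (a + (ε ^ β : ℝ) • y)) * ((pd j U y : ℝ) : ℂ)) * ec1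
    + (Complex.I * (w (a + (ε ^ β : ℝ) • y))
      * (starRingEnd ℂ) (phase ε a ξ θ (a + (ε ^ β : ℝ) • y)) * ((ξ j : ℝ) : ℂ)
      * ((U y : ℝ) : ℂ) / 2) * ec2

private theorem ptXi (hε : 0 < ε) (j : Fin N) (y : Esp N) :
    w (a + (ε ^ β : ℝ) • y) * (starRingEnd ℂ) (zXi ε γ β U a ξ θ j (a + (ε ^ β : ℝ) • y))
      = ((ε ^ (2 * γ + β - 1) : ℝ) : ℂ) * (twist ε γ β a ξ θ w y * (starRingEnd ℂ) (zXi0 U j y))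
        + ((1 / 2 * ε ^ (2 * γ - 1) * a j : ℝ) : ℂ)
          * (twist ε γ β a ξ θ w y * (starRingEnd ℂ) (zTh0 U y)) := by
  have e : ε ^ γ * ε⁻¹ = ε ^ (2 * γ - 1) * ε ^ (-γ) := by
    rw [← Real.rpow_neg_one ε, ← Real.rpow_add hε, ← Real.rpow_add hε]; congr 1; ring
  have ec : ((ε ^ γ : ℝ) : ℂ) * ((ε : ℝ) : ℂ)⁻¹
      = ((ε ^ (2 * γ - 1) : ℝ) : ℂ) * ((ε ^ (-γ) : ℝ) : ℂ) := by
    have h := congrArg (Complex.ofReal) e; push_cast at h; exact h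
  have e3 : ε ^ γ * ε ^ β * ε⁻¹ = ε ^ (2 * γ + β - 1) * ε ^ (-γ) := by
    rw [← Real.rpow_neg_one ε, ← Real.rpow_add hε, ← Real.rpow_add hε, ← Real.rpow_add hε]
    congr 1; ring
  have ec3 : ((ε ^ γ : ℝ) : ℂ) * ((ε ^ β : ℝ) : ℂ) * ((ε : ℝ) : ℂ)⁻¹
      = ((ε ^ (2 * γ + β - 1) : ℝ) : ℂ) * ((ε ^ (-γ) : ℝ) : ℂ) := by
    have h := congrArg (Complex.ofReal) e3; push_cast at h; exact h
  have hSyj : ((a + (ε ^ β : ℝ) • y) j : ℝ) = a j + ε ^ β * y j := rfl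
  rw [zXi, solWave, hres hε y, twist_apply, zXi0, zTh0, hSyj]
  simp only [map_mul, map_div₀, map_ofNat, Complex.conj_I, Complex.conj_ofReal]
  push_cast
  linear_combination (-(Complex.I / 2) * (w (a + (ε ^ β : ℝ) • y))
      * (starRingEnd ℂ) (phase ε a ξ θ (a + (ε ^ β : ℝ) • y)) * ((U y : ℝ) : ℂ)
      * ((y j : ℝ) : ℂ)) * ec3
    + (-(Complex.I / 2) * (w (a + (ε ^ β : ℝ) • y))
      * (starRingEnd ℂ) (phase ε a ξ θ (a + (ε ^ β : ℝ) • y)) * ((U y : ℝ) : ℂ)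
      * ((a j : ℝ) : ℂ)) * ec

end Aux

/-- Lemma `sympl-w-tilde-w`: change of frame for the symplectic pairings. -/
theorem pairing_change_of_frame
    (N : ℕ) (hN : 3 ≤ N) (ε γ β : ℝ) (hε : 0 < ε)
    (U : Esp N → ℝ) (hU : ContDiff ℝ 1 U)
    (hUL2 : MemLp U 2 volume)
    (hgradL2 : MemLp (fun x => ‖grad U x‖) 2 volume)
    (hxUL2 : MemLp (fun x : Esp N => ‖x‖ * U x) 2 volume)
    (a ξ : Esp N) (θ : ℝ) (w : Esp N → ℂ) (hw : MemLp w 2 volume) :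
    (∀ j : Fin N, symp w (zA ε γ β U a ξ θ j)
        = ε ^ (2 * γ + β * ((N : ℝ) - 1)) * symp (twist ε γ β a ξ θ w) (zA0 U j)
          - 1 / 2 * ε ^ (2 * γ + β * (N : ℝ) - 1) * ξ j
            * symp (twist ε γ β a ξ θ w) (zTh0 U)) ∧
    (∀ j : Fin N, symp w (zXi ε γ β U a ξ θ j)
        = ε ^ (2 * γ + β * ((N : ℝ) + 1) - 1) * symp (twist ε γ β a ξ θ w) (zXi0 U j)
          + 1 / 2 * ε ^ (2 * γ + β * (N : ℝ) - 1) * a j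
            * symp (twist ε γ β a ξ θ w) (zTh0 U)) ∧
    symp w (zTh ε γ β U a ξ θ)
      = ε ^ (2 * γ + β * (N : ℝ) - 1) * symp (twist ε γ β a ξ θ w) (zTh0 U) := by
  have hUc : Continuous U := hU.continuous
  have hpdc : ∀ j : Fin N, Continuous (pd j U) := fun j =>
    (hU.continuous_fderiv one_ne_zero).clm_apply continuous_const
  -- MemLp of the rescaled tangent vectors
  have hzTh0 : MemLp (zTh0 U) 2 volume := by
    refine MemLp.of_le hUL2
      ((continuous_const.mul (Complex.continuous_ofReal.comp hUc)).aestronglyMeasurable)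
      (Eventually.of_forall fun x => le_of_eq ?_)
    rw [zTh0, norm_mul, Complex.norm_I, one_mul, Complex.norm_real]
  have hzA0 : ∀ j : Fin N, MemLp (zA0 U j) 2 volume := by
    intro j
    refine MemLp.of_le hgradL2
      ((Complex.continuous_ofReal.comp (hpdc j)).neg.aestronglyMeasurable)
      (Eventually.of_forall fun x => ?_)
    have h := coord_le_norm (grad U x) j
    simp only [zA0, norm_neg, Complex.norm_real, Real.norm_eq_abs, abs_norm]
    exact h
  have hzXi0 : ∀ j : Fin N, MemLp (zXi0 U j) 2 volume := by
    intro j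
    have hcj : Continuous fun x : Esp N => x j := (continuous_apply j).comp (PiLp.continuous_ofLp 2 _)
    refine MemLp.of_le hxUL2
      (((continuous_const.mul (Complex.continuous_ofReal.comp hcj)).mul
        (Complex.continuous_ofReal.comp hUc)).aestronglyMeasurable)
      (Eventually.of_forall fun x => ?_)
    have h1 := coord_le_norm x j
    have h2 : (0:ℝ) ≤ |U x| := abs_nonneg _
    have h3 : ‖zXi0 U j x‖ = 1 / 2 * |x j| * |U x| := by
      rw [zXi0, norm_mul, norm_mul, norm_div, Complex.norm_I, Complex.norm_real,
        Complex.norm_real, Real.norm_eq_abs, Real.norm_eq_abs]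
      norm_num
    rw [h3, Real.norm_eq_abs, abs_mul, abs_norm]
    nlinarith [abs_nonneg (x j), norm_nonneg x]
  -- integrability of products
  have htw : MemLp (twist ε γ β a ξ θ w) 2 volume := twist_memLp hε hw
  have hITh : Integrable (fun y => twist ε γ β a ξ θ w y * (starRingEnd ℂ) (zTh0 U y))
      volume := mulInt htw (conjLp hzTh0)
  have hIA : ∀ j : Fin N, Integrable
      (fun y => twist ε γ β a ξ θ w y * (starRingEnd ℂ) (zA0 U j y)) volume := fun j =>
    mulInt htw (conjLp (hzA0 j))
  have hIXi : ∀ j : Fin N, Integrable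
      (fun y => twist ε γ β a ξ θ w y * (starRingEnd ℂ) (zXi0 U j y)) volume := fun j =>
    mulInt htw (conjLp (hzXi0 j))
  refine ⟨fun j => ?_, fun j => ?_, ?_⟩
  · -- part (i)
    have p1 : ε ^ (β * (N:ℝ)) * ε ^ (2 * γ - β) = ε ^ (2 * γ + β * ((N:ℝ) - 1)) := by
      rw [← Real.rpow_add hε]; congr 1; ring
    have p2 : ε ^ (β * (N:ℝ)) * ε ^ (2 * γ - 1) = ε ^ (2 * γ + β * (N:ℝ) - 1) := by
      rw [← Real.rpow_add hε]; congr 1; ring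
    have q2 : ε ^ (β * (N:ℝ)) * (1 / 2 * ε ^ (2 * γ - 1) * ξ j)
        = 1 / 2 * ε ^ (2 * γ + β * (N:ℝ) - 1) * ξ j := by rw [← p2]; ring
    rw [symp, symp, symp,
      cov' (β := β) (a := a) hε (fun x => w x * (starRingEnd ℂ) (zA ε γ β U a ξ θ j x))]
    simp only [ptA hε]
    rw [integral_sub ((hIA j).const_mul _) (hITh.const_mul _), integral_const_mul,
      integral_const_mul, mul_sub, ← mul_assoc, ← mul_assoc, ← Complex.ofReal_mul,
      ← Complex.ofReal_mul, Complex.sub_im, Complex.im_ofReal_mul, Complex.im_ofReal_mul,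
      p1, q2]
  · -- part (ii)
    have p3 : ε ^ (β * (N:ℝ)) * ε ^ (2 * γ + β - 1) = ε ^ (2 * γ + β * ((N:ℝ) + 1) - 1) := by
      rw [← Real.rpow_add hε]; congr 1; ring
    have p2 : ε ^ (β * (N:ℝ)) * ε ^ (2 * γ - 1) = ε ^ (2 * γ + β * (N:ℝ) - 1) := by
      rw [← Real.rpow_add hε]; congr 1; ring
    have q2 : ε ^ (β * (N:ℝ)) * (1 / 2 * ε ^ (2 * γ - 1) * a j)
        = 1 / 2 * ε ^ (2 * γ + β * (N:ℝ) - 1) * a j := by rw [← p2]; ring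
    rw [symp, symp, symp,
      cov' (β := β) (a := a) hε (fun x => w x * (starRingEnd ℂ) (zXi ε γ β U a ξ θ j x))]
    simp only [ptXi hε]
    rw [integral_add ((hIXi j).const_mul _) (hITh.const_mul _), integral_const_mul,
      integral_const_mul, mul_add, ← mul_assoc, ← mul_assoc, ← Complex.ofReal_mul,
      ← Complex.ofReal_mul, Complex.add_im, Complex.im_ofReal_mul, Complex.im_ofReal_mul,
      p3, q2]
  · -- part (iii)
    have p2 : ε ^ (β * (N:ℝ)) * ε ^ (2 * γ - 1) = ε ^ (2 * γ + β * (N:ℝ) - 1) := by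
      rw [← Real.rpow_add hε]; congr 1; ring
    rw [symp, symp,
      cov' (β := β) (a := a) hε (fun x => w x * (starRingEnd ℂ) (zTh ε γ β U a ξ θ x))]
    simp only [ptTh hε]
    rw [integral_const_mul, ← mul_assoc, ← Complex.ofReal_mul, Complex.im_ofReal_mul, p2]

end NLS
end
end

section
/- Assume the setup with a C¹ potential V : ℝ^N → ℝ, and suppose ψ : ℝ×ℝ^N → ℂ is C¹ in t and C² in x and satisfies pointwise iε∂_tψ + ε²Δψ − f(ε^{−2α}|ψ|²)ψ = V(x)ψ on ℝ×ℝ^N; here U is only assumed positive and C² (not necessarily Schwartz). Then for all (t,x) ∈ ℝ×ℝ^N: ∂_t w̃(t,x) = (i/ε)(ε^β x·v(t) − R_V(t,x))·(U(x) + w̃(t,x)) + i ε^{1−2β}[ Δw̃(t,x) + ω w̃(t,x) − (2 f'(U²(x)) U²(x) + f(U²(x))) Re(w̃(t,x)) − i f(U²(x)) Im(w̃(t,x)) − R_F(t,x) ], where R_F(t,x) := f(|U(x)+w̃(t,x)|²)(U(x)+w̃(t,x)) − f(U²(x))U(x) − (2 f'(U²(x)) U²(x) + f(U²(x))) Re(w̃(t,x))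 − i f(U²(x)) Im(w̃(t,x)). -/
open MeasureTheory Real Filter
open scoped BigOperators ENNReal

noncomputable section

namespace NLS

variable {N : ℕ}

section Aux

variable {N : ℕ}

lemma esum (x : Esp N) : ∑ j, x j • EuclideanSpace.single j (1:ℝ) = x := by
  ext i
  have h1 : (∑ j, x j • EuclideanSpace.single j (1:ℝ)) i
      = ∑ j, (x j • EuclideanSpace.single j (1:ℝ)) i := by
    rw [WithLp.ofLp_sum]; exact Finset.sum_apply (a := i) _ _
  rw [h1]; simp [EuclideanSpace.single_apply]

lemma esum' (x : Esp N) :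
    ((0:ℝ), x) = ∑ j, x j • (((0:ℝ), EuclideanSpace.single j (1:ℝ)) : ℝ × Esp N) := by
  rw [Prod.ext_iff]
  constructor
  · rw [Prod.fst_sum]; simp
  · rw [Prod.snd_sum]; simp [esum]

lemma hasFDerivAt_innerR (ξ x : Esp N) :
    HasFDerivAt (fun z : Esp N => (inner ℝ z ξ : ℝ)) (innerSL ℝ ξ) x := by
  have h : (fun z : Esp N => (inner ℝ z ξ : ℝ)) = fun z => innerSL ℝ ξ z := by
    funext y; exact (real_inner_comm _ _).symm
  rw [h]; exact (innerSL ℝ ξ).hasFDerivAt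

lemma innerSL_single (ξ : Esp N) (j : Fin N) :
    (innerSL ℝ ξ) (EuclideanSpace.single j 1) = ξ j := by
  simp [EuclideanSpace.inner_single_right]

lemma pdC_of_hasFDerivAt {g : Esp N → ℂ} {L : Esp N →L[ℝ] ℂ} {x : Esp N}
    (h : HasFDerivAt g L x) (j : Fin N) : pdC j g x = L (EuclideanSpace.single j 1) := by
  rw [pdC, h.fderiv]

lemma pdC_const_mul {g : Esp N → ℂ} {x : Esp N} (c : ℂ) (h : DifferentiableAt ℝ g x)
    (j : Fin N) : pdC j (fun w => c * g w) x = c * pdC j g x := by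
  rw [pdC, fderiv_const_mul h]; simp [pdC]

lemma pdC_sub {g h : Esp N → ℂ} {x : Esp N} (hg : DifferentiableAt ℝ g x)
    (hh : DifferentiableAt ℝ h x) (j : Fin N) :
    pdC j (fun w => g w - h w) x = pdC j g x - pdC j h x := by
  rw [pdC, fderiv_fun_sub hg hh]; simp [pdC]

lemma pdC_add {g h : Esp N → ℂ} {x : Esp N} (hg : DifferentiableAt ℝ g x)
    (hh : DifferentiableAt ℝ h x) (j : Fin N) :
    pdC j (fun w => g w + h w) x = pdC j g x + pdC j h x := by
  rw [pdC, fderiv_fun_add hg hh]; simp [pdC]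

lemma pdC_ofReal {g : Esp N → ℝ} {x : Esp N} (hg : DifferentiableAt ℝ g x) (j : Fin N) :
    pdC j (fun w => ((g w : ℝ) : ℂ)) x = ((pd j g x : ℝ) : ℂ) := by
  have h : HasFDerivAt (fun w => ((g w : ℝ) : ℂ))
      (Complex.ofRealCLM.comp (fderiv ℝ g x)) x :=
    (Complex.ofRealCLM.hasFDerivAt).comp x hg.hasFDerivAt
  rw [pdC_of_hasFDerivAt h]; simp [pd]

lemma contDiff_pdC {g : Esp N → ℂ} (hg : ContDiff ℝ 2 g) (j : Fin N) :
    Differentiable ℝ (pdC j g) := by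
  have h1 : ContDiff ℝ 1 (fderiv ℝ g) := hg.fderiv_right (by norm_num)
  have h2 : pdC j g = fun z =>
      (ContinuousLinearMap.apply ℝ ℂ (EuclideanSpace.single j 1)) (fderiv ℝ g z) := rfl
  rw [h2]
  exact ((ContinuousLinearMap.apply ℝ ℂ (EuclideanSpace.single j 1)).contDiff.comp
    h1).differentiable one_ne_zero

lemma contDiff_pd {g : Esp N → ℝ} (hg : ContDiff ℝ 2 g) (j : Fin N) :
    Differentiable ℝ (pd j g) := by
  have h1 : ContDiff ℝ 1 (fderiv ℝ g) := hg.fderiv_right (by norm_num)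
  have h2 : pd j g = fun z =>
      (ContinuousLinearMap.apply ℝ ℝ (EuclideanSpace.single j 1)) (fderiv ℝ g z) := rfl
  rw [h2]
  exact ((ContinuousLinearMap.apply ℝ ℝ (EuclideanSpace.single j 1)).contDiff.comp
    h1).differentiable one_ne_zero

lemma norm_sq_sum (ξ : Esp N) : ‖ξ‖^2 = ∑ j, ξ j ^ 2 := by
  rw [EuclideanSpace.norm_eq, Real.sq_sqrt (by positivity)]; simp [sq_abs]

/-- the scalar phase exponential at fixed time -/
def cc (ε B W0 T0 : ℝ) (ξ0 : Esp N) (w : Esp N) : ℂ :=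
  Complex.exp (Complex.I / (ε:ℂ) * ((W0 - (1/2 * (B * (inner ℝ w ξ0 : ℝ)) + T0) : ℝ) : ℂ))

lemma hasFDerivAt_cc (ε B W0 T0 : ℝ) (ξ0 z : Esp N) :
    HasFDerivAt (cc ε B W0 T0 ξ0)
      (cc ε B W0 T0 ξ0 z • ((-(Complex.I * B) / (2*ε)) •
        (Complex.ofRealCLM.comp (innerSL ℝ ξ0)))) z := by
  have h1 : HasFDerivAt (fun w : Esp N => ((W0 - (1/2 * (B * (inner ℝ w ξ0 : ℝ)) + T0) : ℝ)))
      ((-(B/2) : ℝ) • (innerSL ℝ ξ0)) z := by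
    have h0 := ((hasFDerivAt_innerR ξ0 z).const_mul B).const_mul (1/2 : ℝ)
    have := ((h0.add_const T0).const_sub W0)
    refine this.congr_fderiv ?_
    ext w; simp; ring
  have h2 : HasFDerivAt (fun w : Esp N =>
        Complex.I / (ε:ℂ) * (((W0 - (1/2 * (B * (inner ℝ w ξ0 : ℝ)) + T0) : ℝ)) : ℂ))
      ((-(Complex.I * B) / (2*ε)) • (Complex.ofRealCLM.comp (innerSL ℝ ξ0))) z := by
    have h1' := (Complex.ofRealCLM.hasFDerivAt.comp z h1).const_mul (Complex.I / (ε:ℂ))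
    refine h1'.congr_fderiv ?_
    ext w
    simp [ContinuousLinearMap.smul_apply]
    ring
  exact h2.cexp

lemma diffAt_ccg (ε B W0 T0 : ℝ) (ξ0 b z : Esp N) (g : Esp N → ℂ)
    (hg : DifferentiableAt ℝ g (b + B • z)) :
    DifferentiableAt ℝ (fun w => cc ε B W0 T0 ξ0 w * g (b + B • w)) z := by
  have haff : HasFDerivAt (fun w : Esp N => b + B • w)
      (B • ContinuousLinearMap.id ℝ (Esp N)) z :=
    ((hasFDerivAt_id z).const_smul B).const_add b
  exact ((hasFDerivAt_cc ε B W0 T0 ξ0 z).mul ((hg.hasFDerivAt).comp z haff)).differentiableAt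

lemma pdC_main (ε B W0 T0 : ℝ) (ξ0 b z : Esp N) (g : Esp N → ℂ)
    (hg : DifferentiableAt ℝ g (b + B • z)) (j : Fin N) :
    pdC j (fun w => cc ε B W0 T0 ξ0 w * g (b + B • w)) z
      = cc ε B W0 T0 ξ0 z *
          ((-(Complex.I * B) / (2*ε)) * ((ξ0 j : ℝ):ℂ) * g (b + B • z)
            + ((B:ℝ):ℂ) * pdC j g (b + B • z)) := by
  have haff : HasFDerivAt (fun w : Esp N => b + B • w)
      (B • ContinuousLinearMap.id ℝ (Esp N)) z :=
    ((hasFDerivAt_id z).const_smul B).const_add b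
  have hgc : HasFDerivAt (fun w => g (b + B • w))
      ((fderiv ℝ g (b + B • z)).comp (B • ContinuousLinearMap.id ℝ (Esp N))) z :=
    (hg.hasFDerivAt).comp z haff
  have h := (hasFDerivAt_cc ε B W0 T0 ξ0 z).fun_mul hgc
  rw [pdC_of_hasFDerivAt h]
  simp [ContinuousLinearMap.smul_apply, innerSL_single, pdC]
  ring

/-- the explicit form of `w̃`. -/
lemma wtil_rep (ε γ β : ℝ) (hε : 0 < ε) (U : Esp N → ℝ) (a ξ : ℝ → Esp N) (θf ωf : ℝ → ℝ)
    (ψ : ℝ → Esp N → ℂ) (s : ℝ) (z : Esp N) :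
    wtil ε γ β U a ξ θf ωf ψ s z
      = ((ε^(-γ) : ℝ) : ℂ) * cc ε (ε^β) (ωf s) (θf s) (ξ s) z
          * ψ s (a s + (ε^β : ℝ) • z) - ((U z : ℝ) : ℂ) := by
  have h1 : (a s + (ε^β : ℝ) • z) - a s = (ε^β : ℝ) • z := add_sub_cancel_left _ _
  have h2 : (ε^(-β) : ℝ) • ((ε^β : ℝ) • z) = z := by
    rw [smul_smul, ← Real.rpow_add hε]; simp
  have h3 : (inner ℝ ((ε^β : ℝ) • z) (ξ s) : ℝ) = ε^β * (inner ℝ z (ξ s) : ℝ) :=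
    real_inner_smul_left _ _ _
  simp only [wtil, twist, wfun, solWave, phase, cc, h1, h2, h3]
  set A : ℝ := 1/2 * (ε^β * (inner ℝ z (ξ s) : ℝ)) + θf s with hA
  have e1 : Complex.exp (Complex.I/ε * ((ωf s - A : ℝ):ℂ))
      = Complex.exp (Complex.I/ε * ((ωf s:ℝ):ℂ)) * Complex.exp (-(Complex.I/ε) * ((A:ℝ):ℂ)) := by
    rw [← Complex.exp_add]; congr 1; push_cast; ring
  have e2 : Complex.exp (-(Complex.I/ε) * ((A:ℝ):ℂ)) * Complex.exp (Complex.I/ε * ((A:ℝ):ℂ)) = 1 := by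
    rw [← Complex.exp_add]
    have h4 : -(Complex.I/ε) * ((A:ℝ):ℂ) + Complex.I/ε * ((A:ℝ):ℂ) = 0 := by ring
    rw [h4, Complex.exp_zero]
  have e3 : ((ε^(-γ):ℝ):ℂ) * ((ε^γ:ℝ):ℂ) = 1 := by
    rw [← Complex.ofReal_mul, ← Real.rpow_add hε]; norm_num
  rw [e1, Complex.ofReal_mul]
  linear_combination (-(((ε^(-γ):ℝ):ℂ)) * ((ε^γ:ℝ):ℂ) * ((U z:ℝ):ℂ)) * e2 + (-((U z:ℝ):ℂ)) * e3

end Aux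

set_option maxHeartbeats 2000000 in
/-- Proposition `der-w-tilde`: the evolution equation satisfied by `w̃`. -/
theorem wtilde_evolution
    (N : ℕ) (hN : 3 ≤ N) (ε p α β γ ω ρ : ℝ) (hε : 0 < ε)
    (hp0 : 0 < p) (hβ : β = 1 + (α - γ) * p)
    (f : ℝ → ℝ) (hfc : ContinuousOn f (Set.Ici 0)) (hf1 : ContDiffOn ℝ 1 f (Set.Ioi 0))
    (hfhom : ∀ lam > (0:ℝ), ∀ s > (0:ℝ), f (lam * s) = lam ^ p * f s)
    (U : Esp N → ℝ) (hU : ContDiff ℝ 2 U) (hUpos : ∀ x, 0 < U x)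
    (hell : ∀ x, -lapR U x + f (U x ^ 2) * U x - ω * U x = 0)
    (hρ : (∫ x, U x ^ 2) = ρ) (hρ0 : 0 < ρ)
    (V : Esp N → ℝ) (hV : ContDiff ℝ 1 V)
    (a ξ : ℝ → Esp N) (θf ωf : ℝ → ℝ)
    (htraj : Traj ε β ρ U V a ξ θf)
    (hvint : ∀ t, Integrable fun x : Esp N =>
      U x ^ 2 • (grad V (a t + (ε ^ β : ℝ) • x) - grad V (a t)))
    (hforce : Continuous fun t => ∫ x, U x ^ 2 • grad V (a t + (ε ^ β : ℝ) • x))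
    (hωf : OmEq ε β ω V a ξ ωf)
    (ψ : ℝ → Esp N → ℂ)
    (hψ : ContDiff ℝ 1 fun q : ℝ × Esp N => ψ q.1 q.2)
    (hψx : ∀ t, ContDiff ℝ 2 (ψ t))
    (hNLS : ∀ t x, NLSeq ε α f V ψ t x) :
    ∀ (t : ℝ) (x : Esp N),
      deriv (fun s => wtil ε γ β U a ξ θf ωf ψ s x) t
        = Complex.I / (ε : ℂ)
              * ((ε ^ β * (inner ℝ x (vfun ε β ρ U V a t) : ℝ) - RVfun ε β V a t x : ℝ) : ℂ)
              * (((U x : ℝ) : ℂ) + wtil ε γ β U a ξ θf ωf ψ t x)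
          + Complex.I * ((ε ^ (1 - 2 * β) : ℝ) : ℂ)
              * (lapC (wtil ε γ β U a ξ θf ωf ψ t) x
                + ((ω : ℝ) : ℂ) * wtil ε γ β U a ξ θf ωf ψ t x
                - ((2 * deriv f (U x ^ 2) * U x ^ 2 + f (U x ^ 2) : ℝ) : ℂ)
                    * (((wtil ε γ β U a ξ θf ωf ψ t x).re : ℝ) : ℂ)
                - Complex.I * ((f (U x ^ 2) : ℝ) : ℂ)
                    * (((wtil ε γ β U a ξ θf ωf ψ t x).im : ℝ) : ℂ)
                - RFfun f U (wtil ε γ β U a ξ θf ωf ψ t) x) := by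
  intro t x
  have heR : (ε:ℝ) ≠ 0 := hε.ne'
  have he : (ε:ℂ) ≠ 0 := by exact_mod_cast heR
  have hB : (0:ℝ) < ε ^ β := Real.rpow_pos_of_pos hε β
  have hBne : ((ε^β:ℝ):ℂ) ≠ 0 := by exact_mod_cast hB.ne'
  -- differentiability facts
  have hψtd : Differentiable ℝ (ψ t) := (hψx t).differentiable two_ne_zero
  have hUd : Differentiable ℝ U := hU.differentiable two_ne_zero
  have hψjd : ∀ j, Differentiable ℝ (pdC j (ψ t)) := fun j => contDiff_pdC (hψx t) j
  have hpdUd : ∀ j, Differentiable ℝ (pd j U) := fun j => contDiff_pd hU j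
  have hrep := wtil_rep ε γ β hε U a ξ θf ωf ψ
  -- spatial derivatives
  have hfun : wtil ε γ β U a ξ θf ωf ψ t
      = fun w => ((ε^(-γ):ℝ):ℂ) * (cc ε (ε^β) (ωf t) (θf t) (ξ t) w
          * ψ t (a t + (ε^β:ℝ) • w)) - ((U w : ℝ):ℂ) := by
    funext w; rw [hrep t w]; ring
  have hccg : ∀ z, DifferentiableAt ℝ
      (fun w => cc ε (ε^β) (ωf t) (θf t) (ξ t) w * ψ t (a t + (ε^β:ℝ) • w)) z :=
    fun z => diffAt_ccg _ _ _ _ _ _ _ _ (hψtd _)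
  have hUre : ∀ z, DifferentiableAt ℝ (fun w : Esp N => ((U w : ℝ):ℂ)) z := fun z =>
    ((Complex.ofRealCLM.hasFDerivAt).comp z (hUd z).hasFDerivAt).differentiableAt
  have hstep1 : ∀ z j, pdC j (wtil ε γ β U a ξ θf ωf ψ t) z
      = ((ε^(-γ):ℝ):ℂ) * (cc ε (ε^β) (ωf t) (θf t) (ξ t) z *
          ((-(Complex.I * (ε^β:ℝ)) / (2*(ε:ℂ))) * ((ξ t j:ℝ):ℂ) * ψ t (a t + (ε^β:ℝ) • z)
            + ((ε^β:ℝ):ℂ) * pdC j (ψ t) (a t + (ε^β:ℝ) • z)))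
        - ((pd j U z:ℝ):ℂ) := by
    intro z j
    rw [hfun,
      pdC_sub (g := fun w => ((ε^(-γ):ℝ):ℂ) * (cc ε (ε^β) (ωf t) (θf t) (ξ t) w
          * ψ t (a t + (ε^β:ℝ) • w))) (h := fun w : Esp N => ((U w : ℝ):ℂ))
        ((hccg z).const_mul _) (hUre z) j,
      pdC_const_mul _ (hccg z) j,
      pdC_main ε (ε^β) (ωf t) (θf t) (ξ t) (a t) z (ψ t) (hψtd _) j,
      pdC_ofReal (hUd z) j]
  have hstep2 : ∀ j, pdC j (pdC j (wtil ε γ β U a ξ θf ωf ψ t)) x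
      = ((ε^(-γ):ℝ):ℂ) * (cc ε (ε^β) (ωf t) (θf t) (ξ t) x *
          ((-(Complex.I * (ε^β:ℝ)) / (2*(ε:ℂ))) * ((ξ t j:ℝ):ℂ) *
            ((-(Complex.I * (ε^β:ℝ)) / (2*(ε:ℂ))) * ((ξ t j:ℝ):ℂ) * ψ t (a t + (ε^β:ℝ) • x)
              + ((ε^β:ℝ):ℂ) * pdC j (ψ t) (a t + (ε^β:ℝ) • x))
            + ((ε^β:ℝ):ℂ) *
              ((-(Complex.I * (ε^β:ℝ)) / (2*(ε:ℂ))) * ((ξ t j:ℝ):ℂ) * pdC j (ψ t) (a t + (ε^β:ℝ) • x)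
                + ((ε^β:ℝ):ℂ) * pdC j (pdC j (ψ t)) (a t + (ε^β:ℝ) • x))))
        - ((pd j (pd j U) x:ℝ):ℂ) := by
    intro j
    have hg2 : ∀ w0, DifferentiableAt ℝ
        (fun w => (-(Complex.I * (ε^β:ℝ)) / (2*(ε:ℂ))) * ((ξ t j:ℝ):ℂ) * ψ t w
          + ((ε^β:ℝ):ℂ) * pdC j (ψ t) w) w0 := fun w0 =>
      (((hψtd w0).const_mul _).add ((hψjd j w0).const_mul _))
    have hfun2 : pdC j (wtil ε γ β U a ξ θf ωf ψ t)
        = fun z => ((ε^(-γ):ℝ):ℂ) * (cc ε (ε^β) (ωf t) (θf t) (ξ t) z *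
            (fun w => (-(Complex.I * (ε^β:ℝ)) / (2*(ε:ℂ))) * ((ξ t j:ℝ):ℂ) * ψ t w
              + ((ε^β:ℝ):ℂ) * pdC j (ψ t) w) (a t + (ε^β:ℝ) • z))
          - ((pd j U z:ℝ):ℂ) :=
      funext fun z => hstep1 z j
    rw [hfun2,
      pdC_sub (g := fun z => ((ε^(-γ):ℝ):ℂ) * (cc ε (ε^β) (ωf t) (θf t) (ξ t) z *
            (fun w => (-(Complex.I * (ε^β:ℝ)) / (2*(ε:ℂ))) * ((ξ t j:ℝ):ℂ) * ψ t w
              + ((ε^β:ℝ):ℂ) * pdC j (ψ t) w) (a t + (ε^β:ℝ) • z)))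
        (h := fun z : Esp N => ((pd j U z : ℝ):ℂ))
        ((diffAt_ccg _ _ _ _ _ _ _ _ (hg2 _)).const_mul _)
        (((Complex.ofRealCLM.hasFDerivAt).comp x (hpdUd j x).hasFDerivAt).differentiableAt) j,
      pdC_const_mul _ (diffAt_ccg _ _ _ _ _ _ _ _ (hg2 _)) j,
      pdC_main ε (ε^β) (ωf t) (θf t) (ξ t) (a t) x _ (hg2 _) j,
      pdC_ofReal (hpdUd j x) j,
      pdC_add ((hψtd _).const_mul _) ((hψjd j _).const_mul _) j,
      pdC_const_mul _ (hψtd _) j, pdC_const_mul _ (hψjd j _) j]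
  have hlap : lapC (wtil ε γ β U a ξ θf ωf ψ t) x
      = ((ε^(-γ):ℝ):ℂ) * cc ε (ε^β) (ωf t) (θf t) (ξ t) x *
          ((-(Complex.I * (ε^β:ℝ)) / (2*(ε:ℂ)))^2 * ((‖ξ t‖^2 : ℝ):ℂ) * ψ t (a t + (ε^β:ℝ) • x)
            + 2 * (-(Complex.I * (ε^β:ℝ)) / (2*(ε:ℂ))) * ((ε^β:ℝ):ℂ)
                * (∑ j, ((ξ t j:ℝ):ℂ) * pdC j (ψ t) (a t + (ε^β:ℝ) • x))
            + ((ε^β:ℝ):ℂ)^2 * lapC (ψ t) (a t + (ε^β:ℝ) • x))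
        - ((lapR U x:ℝ):ℂ) := by
    rw [lapC, Finset.sum_congr rfl (fun j _ => hstep2 j), Finset.sum_sub_distrib]
    have hlapU : (∑ j, ((pd j (pd j U) x:ℝ):ℂ)) = ((lapR U x:ℝ):ℂ) := by
      rw [lapR]; push_cast; ring
    rw [hlapU]
    congr 1
    have hsq : ((‖ξ t‖^2 : ℝ):ℂ) = ∑ j, ((ξ t j:ℝ):ℂ)^2 := by
      rw [norm_sq_sum]; push_cast; ring
    rw [lapC, hsq]
    simp only [Finset.mul_sum, Finset.sum_mul, ← Finset.sum_add_distrib]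
    refine Finset.sum_congr rfl fun j _ => ?_
    ring
  -- time derivative
  have hFd : HasFDerivAt (fun q : ℝ × Esp N => ψ q.1 q.2)
      (fderiv ℝ (fun q : ℝ × Esp N => ψ q.1 q.2) (t, a t + (ε^β:ℝ) • x))
      (t, a t + (ε^β:ℝ) • x) :=
    ((hψ.differentiable one_ne_zero) _).hasFDerivAt
  have hcurve : HasDerivAt (fun s => ((s, a s + (ε^β:ℝ) • x) : ℝ × Esp N)) ((1:ℝ), ξ t) t :=
    (hasDerivAt_id t).prodMk ((htraj.2.1 t).add_const _)
  have hψcomp : HasDerivAt (fun s => ψ s (a s + (ε^β:ℝ) • x))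
      ((fderiv ℝ (fun q : ℝ × Esp N => ψ q.1 q.2) (t, a t + (ε^β:ℝ) • x)) ((1:ℝ), ξ t)) t := by
    have h := hFd.comp_hasDerivAt t hcurve
    simpa [Function.comp_def] using h
  have hξ' := htraj.2.2.1 t
  have hinner : HasDerivAt (fun s => (inner ℝ x (ξ s) : ℝ))
      ((inner ℝ x (-((2/ρ) • ∫ z, U z^2 • grad V (a t + (ε^β:ℝ) • z))) : ℝ)) t := by
    have h := (innerSL ℝ x).hasFDerivAt.comp_hasDerivAt t hξ'
    simpa [Function.comp_def] using h
  have hph : HasDerivAt (fun s => (ωf s - (1/2 * (ε^β * (inner ℝ x (ξ s) : ℝ)) + θf s)))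
      ((ε^(2-2*β)*ω - 1/4*‖ξ t‖^2 + V (a t))
        - (1/2 * (ε^β * (inner ℝ x (-((2/ρ) • ∫ z, U z^2 • grad V (a t + (ε^β:ℝ) • z))) : ℝ)) + 0)) t :=
    (hωf.2 t).sub ((((hinner.const_mul (ε^β)).const_mul (1/2))).add (htraj.2.2.2 t))
  have hcct : HasDerivAt (fun s => cc ε (ε^β) (ωf s) (θf s) (ξ s) x)
      (cc ε (ε^β) (ωf t) (θf t) (ξ t) x * (Complex.I/(ε:ℂ) *
        (((ε^(2-2*β)*ω - 1/4*‖ξ t‖^2 + V (a t))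
          - (1/2 * (ε^β * (inner ℝ x (-((2/ρ) • ∫ z, U z^2 • grad V (a t + (ε^β:ℝ) • z))) : ℝ)) + 0) : ℝ):ℂ))) t := by
    simp only [cc]
    exact ((hph.ofReal_comp).const_mul (Complex.I/(ε:ℂ))).cexp
  have hWt : HasDerivAt (fun s => wtil ε γ β U a ξ θf ωf ψ s x)
      (((ε^(-γ):ℝ):ℂ) * ((cc ε (ε^β) (ωf t) (θf t) (ξ t) x * (Complex.I/(ε:ℂ) *
          (((ε^(2-2*β)*ω - 1/4*‖ξ t‖^2 + V (a t))
            - (1/2 * (ε^β * (inner ℝ x (-((2/ρ) • ∫ z, U z^2 • grad V (a t + (ε^β:ℝ) • z))) : ℝ)) + 0) : ℝ):ℂ)))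
            * ψ t (a t + (ε^β:ℝ) • x)
        + cc ε (ε^β) (ωf t) (θf t) (ξ t) x *
            ((fderiv ℝ (fun q : ℝ × Esp N => ψ q.1 q.2) (t, a t + (ε^β:ℝ) • x)) ((1:ℝ), ξ t)))) t := by
    have hfunt : (fun s => wtil ε γ β U a ξ θf ωf ψ s x)
        = fun s => ((ε^(-γ):ℝ):ℂ) * (cc ε (ε^β) (ωf s) (θf s) (ξ s) x
            * ψ s (a s + (ε^β:ℝ) • x)) - ((U x:ℝ):ℂ) := by
      funext s; rw [hrep s x]; ring
    rw [hfunt]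
    exact ((hcct.mul hψcomp).const_mul _).sub_const _
  -- identification of partial derivatives
  have hF10 : HasDerivAt (fun s => ψ s (a t + (ε^β:ℝ) • x))
      ((fderiv ℝ (fun q : ℝ × Esp N => ψ q.1 q.2) (t, a t + (ε^β:ℝ) • x)) ((1:ℝ), (0:Esp N))) t := by
    have h := hFd.comp_hasDerivAt t ((hasDerivAt_id t).prodMk (hasDerivAt_const t (a t + (ε^β:ℝ) • x)))
    simpa [Function.comp_def] using h
  have hpdj : ∀ j, pdC j (ψ t) (a t + (ε^β:ℝ) • x)
      = (fderiv ℝ (fun q : ℝ × Esp N => ψ q.1 q.2) (t, a t + (ε^β:ℝ) • x))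
          ((0:ℝ), EuclideanSpace.single j 1) := by
    intro j
    have hmk : HasFDerivAt (fun z : Esp N => ((t, z) : ℝ × Esp N))
        (ContinuousLinearMap.inr ℝ ℝ (Esp N)) (a t + (ε^β:ℝ) • x) :=
      hasFDerivAt_prodMk_right t _
    have h2 : HasFDerivAt (ψ t)
        ((fderiv ℝ (fun q : ℝ × Esp N => ψ q.1 q.2) (t, a t + (ε^β:ℝ) • x)).comp
          (ContinuousLinearMap.inr ℝ ℝ (Esp N))) (a t + (ε^β:ℝ) • x) := by
      have h3 := hFd.comp (a t + (ε^β:ℝ) • x) hmk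
      simpa [Function.comp_def] using h3
    rw [pdC_of_hasFDerivAt h2]
    simp
  have hsplit : (fderiv ℝ (fun q : ℝ × Esp N => ψ q.1 q.2) (t, a t + (ε^β:ℝ) • x)) ((1:ℝ), ξ t)
      = (fderiv ℝ (fun q : ℝ × Esp N => ψ q.1 q.2) (t, a t + (ε^β:ℝ) • x)) ((1:ℝ), (0:Esp N))
        + ∑ j, ((ξ t j:ℝ):ℂ) * pdC j (ψ t) (a t + (ε^β:ℝ) • x) := by
    have h1 : ((1:ℝ), ξ t) = ((1:ℝ), (0:Esp N)) + ((0:ℝ), ξ t) := by simp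
    rw [h1, map_add]
    congr 1
    rw [esum' (ξ t), map_sum]
    refine Finset.sum_congr rfl fun j _ => ?_
    rw [_root_.map_smul, hpdj j, Complex.real_smul]
  -- NLS equation at the image point
  have hN := hNLS t (a t + (ε^β:ℝ) • x)
  rw [NLSeq] at hN
  rw [hF10.deriv] at hN
  -- the modulus of the phase factor is 1
  have habs : ∀ r : ℝ, ‖Complex.exp (Complex.I / (ε:ℂ) * ((r:ℝ):ℂ))‖ = 1 := by
    intro r
    rw [Complex.norm_exp]
    have hre : (Complex.I / (ε:ℂ) * ((r:ℝ):ℂ)).re = 0 := by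
      simp [Complex.div_re, Complex.mul_re]
    rw [hre, Real.exp_zero]
  have hWv : ((U x:ℝ):ℂ) + wtil ε γ β U a ξ θf ωf ψ t x
      = ((ε^(-γ):ℝ):ℂ) * cc ε (ε^β) (ωf t) (θf t) (ξ t) x * ψ t (a t + (ε^β:ℝ) • x) := by
    rw [hrep t x]; ring
  -- homogeneity of f
  have hfP : ((f (ε^(-(2*α)) * ‖ψ t (a t + (ε^β:ℝ) • x)‖^2) : ℝ):ℂ) * ψ t (a t + (ε^β:ℝ) • x)
      = ((ε^(2-2*β):ℝ):ℂ) *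
        ((f (‖((ε^(-γ):ℝ):ℂ) * cc ε (ε^β) (ωf t) (θf t) (ξ t) x * ψ t (a t + (ε^β:ℝ) • x)‖^2) : ℝ):ℂ)
        * ψ t (a t + (ε^β:ℝ) • x) := by
    by_cases hP0 : ψ t (a t + (ε^β:ℝ) • x) = 0
    · rw [hP0]; ring
    · have hg0pos : (0:ℝ) < ε^(-γ) := Real.rpow_pos_of_pos hε _
      have hccne : cc ε (ε^β) (ωf t) (θf t) (ξ t) x ≠ 0 := Complex.exp_ne_zero _
      have hnorm : ‖((ε^(-γ):ℝ):ℂ) * cc ε (ε^β) (ωf t) (θf t) (ξ t) x * ψ t (a t + (ε^β:ℝ) • x)‖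
          = ε^(-γ) * ‖ψ t (a t + (ε^β:ℝ) • x)‖ := by
        rw [norm_mul, norm_mul]
        have h1 : ‖((ε^(-γ):ℝ):ℂ)‖ = ε^(-γ) := by
          rw [Complex.norm_real, Real.norm_eq_abs, abs_of_pos hg0pos]
        have h2 : ‖cc ε (ε^β) (ωf t) (θf t) (ξ t) x‖ = 1 := habs _
        rw [h1, h2]; ring
      have hne : ((ε^(-γ):ℝ):ℂ) * cc ε (ε^β) (ωf t) (θf t) (ξ t) x
          * ψ t (a t + (ε^β:ℝ) • x) ≠ 0 :=
        mul_ne_zero (mul_ne_zero (by exact_mod_cast hg0pos.ne') hccne) hP0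
      have hspos : (0:ℝ) < ‖((ε^(-γ):ℝ):ℂ) * cc ε (ε^β) (ωf t) (θf t) (ξ t) x
          * ψ t (a t + (ε^β:ℝ) • x)‖^2 := pow_pos (norm_pos_iff.mpr hne) 2
      have hkey : ε^(-(2*α)) * ‖ψ t (a t + (ε^β:ℝ) • x)‖^2
          = ε^(2*γ-2*α) * ‖((ε^(-γ):ℝ):ℂ) * cc ε (ε^β) (ωf t) (θf t) (ξ t) x
              * ψ t (a t + (ε^β:ℝ) • x)‖^2 := by
        have hco : ε^(2*γ-2*α) * (ε^(-γ) * ε^(-γ)) = ε^(-(2*α)) := by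
          rw [← Real.rpow_add hε, ← Real.rpow_add hε,
            show (2*γ-2*α + (-γ + -γ)) = -(2*α) by ring]
        rw [hnorm, mul_pow, pow_two (ε^(-γ)), ← hco]
        ring
      rw [hkey, hfhom (ε^(2*γ-2*α)) (Real.rpow_pos_of_pos hε _) _ hspos]
      have hpow : (ε^(2*γ-2*α))^p = ε^(2-2*β) := by
        rw [← Real.rpow_mul hε.le]
        congr 1
        rw [hβ]; ring
      rw [hpow]
      push_cast
      ring
  -- integral splitting for v(t)
  have hUint : Integrable (fun z : Esp N => U z^2) := by
    by_contra hcon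
    rw [MeasureTheory.integral_undef hcon] at hρ
    linarith
  have hvin : (inner ℝ x (vfun ε β ρ U V a t) : ℝ)
      = (1/ρ) * (inner ℝ x (∫ z, U z^2 • grad V (a t + (ε^β:ℝ) • z)) : ℝ)
        - (inner ℝ x (grad V (a t)) : ℝ) := by
    rw [vfun]
    have hsplit2 : (fun z : Esp N => U z^2 • (grad V (a t + (ε^β:ℝ) • z) - grad V (a t)))
        = fun z => U z^2 • grad V (a t + (ε^β:ℝ) • z) - U z^2 • grad V (a t) := by
      funext z; rw [smul_sub]
    rw [hsplit2, integral_sub (htraj.1 t) (hUint.smul_const _), integral_smul_const, hρ]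
    rw [real_inner_smul_right, inner_sub_right, real_inner_smul_right]
    field_simp
  have hxin : (inner ℝ x (-((2/ρ) • ∫ z, U z^2 • grad V (a t + (ε^β:ℝ) • z))) : ℝ)
      = -((2/ρ) * (inner ℝ x (∫ z, U z^2 • grad V (a t + (ε^β:ℝ) • z)) : ℝ)) := by
    rw [inner_neg_right, real_inner_smul_right]
  -- elliptic equation
  have hellx : lapR U x = f (U x^2) * U x - ω * U x := by linarith [hell x]
  -- from the NLS equation, solve for the time derivative of ψ
  rw [hfP] at hN
  have hF10v : (fderiv ℝ (fun q : ℝ × Esp N => ψ q.1 q.2) (t, a t + (ε^β:ℝ) • x)) ((1:ℝ), (0:Esp N))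
      = (-(Complex.I) * (((V (a t + (ε^β:ℝ) • x) : ℝ):ℂ) * ψ t (a t + (ε^β:ℝ) • x)
          + ((ε^(2-2*β):ℝ):ℂ) *
            ((f (‖((ε^(-γ):ℝ):ℂ) * cc ε (ε^β) (ωf t) (θf t) (ξ t) x * ψ t (a t + (ε^β:ℝ) • x)‖^2) : ℝ):ℂ)
            * ψ t (a t + (ε^β:ℝ) • x)
          - ((ε:ℝ):ℂ)^2 * lapC (ψ t) (a t + (ε^β:ℝ) • x))) / (ε:ℂ) := by
    rw [eq_div_iff he]
    have hI : Complex.I * Complex.I = -1 := Complex.I_mul_I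
    linear_combination (-(Complex.I)) * hN
      + ((ε:ℂ) * ((fderiv ℝ (fun q : ℝ × Esp N => ψ q.1 q.2) (t, a t + (ε^β:ℝ) • x))
          ((1:ℝ), (0:Esp N)))) * hI
  -- rpow identities
  have hXr : ε^(1-2*β) * (ε^β * ε^β) = ε := by
    have h1 : ε^(1-2*β) * (ε^β * ε^β) = ε^((1-2*β) + (β+β)) := by
      rw [Real.rpow_add hε, Real.rpow_add hε]
    rw [h1, show (1-2*β)+(β+β) = (1:ℝ) by ring, Real.rpow_one]
  have hYr : ε^(2-2*β) * (ε^β * ε^β) = ε * ε := by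
    have h1 : ε^(2-2*β) * (ε^β * ε^β) = ε^((2-2*β) + (β+β)) := by
      rw [Real.rpow_add hε, Real.rpow_add hε]
    rw [h1, show (2-2*β)+(β+β) = (1:ℝ)+1 by ring, Real.rpow_add hε, Real.rpow_one]
  have hXdiv : ((ε^(1-2*β):ℝ):ℂ) = (ε:ℂ) / (((ε^β:ℝ):ℂ) * ((ε^β:ℝ):ℂ)) := by
    rw [eq_div_iff (mul_ne_zero hBne hBne)]
    exact_mod_cast hXr
  have hYdiv : ((ε^(2-2*β):ℝ):ℂ) = (ε:ℂ) * (ε:ℂ) / (((ε^β:ℝ):ℂ) * ((ε^β:ℝ):ℂ)) := by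
    rw [eq_div_iff (mul_ne_zero hBne hBne)]
    exact_mod_cast hYr
  -- final assembly
  rw [hWt.deriv]
  simp only [RFfun, RVfun]
  rw [hWv, hrep t x, hlap, hsplit, hF10v]
  rw [hellx, hvin, hxin]
  push_cast
  rw [hXdiv, hYdiv]
  have hρc : ((ρ:ℝ):ℂ) ≠ 0 := by exact_mod_cast hρ0.ne'
  have hI3 : Complex.I^3 = -Complex.I := by
    rw [pow_succ, Complex.I_sq]; ring
  set PP := ψ t (a t + (ε^β:ℝ) • x) with hsPP
  set CC := cc ε (ε^β) (ωf t) (θf t) (ξ t) x with hsCC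
  set LL := lapC (ψ t) (a t + (ε^β:ℝ) • x) with hsLL
  set SS := ∑ j, ((ξ t j:ℝ):ℂ) * pdC j (ψ t) (a t + (ε^β:ℝ) • x) with hsSS
  set rr1 := (inner ℝ x (∫ z, U z^2 • grad V (a t + (ε^β:ℝ) • z)) : ℝ) with hsr1
  set rr2 := (inner ℝ x (grad V (a t)) : ℝ) with hsr2
  set nxi := ‖ξ t‖ with hsnxi
  set VA := V (a t) with hsVA
  set VY := V (a t + (ε^β:ℝ) • x) with hsVY
  set fW := f (‖((ε^(-γ):ℝ):ℂ) * CC * PP‖^2) with hsfW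
  set RE := ((((ε^(-γ):ℝ):ℂ) * CC * PP - ((U x:ℝ):ℂ)).re : ℝ) with hsRE
  set IM := ((((ε^(-γ):ℝ):ℂ) * CC * PP - ((U x:ℝ):ℂ)).im : ℝ) with hsIM
  set fU := f (U x^2) with hsfU
  set dfU := deriv f (U x^2) with hsdfU
  set UX := U x with hsUX
  set EB := ((ε^β:ℝ):ℂ) with hsEB
  set EG := ((ε^(-γ):ℝ):ℂ) with hsEG
  set RC := ((ρ:ℝ):ℂ) with hsRC
  set EE := ((ε:ℝ):ℂ) with hsEE
  field_simp
  ring_nf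
  simp only [Complex.I_sq, hI3]
  field_simp
  ring_nf

end NLS
end
end

section
/- Let N ≥ 3, ε > 0, β ∈ ℝ, v ∈ ℝ^N. Let U : ℝ^N → ℝ be a Schwartz function with ∫ U² dx = ρ, and let R : ℝ^N → ℝ be measurable with (1+|x|)|R(x)|U²(x) ∈ L¹(ℝ^N) and |R(x)|U(x)|∇U(x)| ∈ L¹(ℝ^N). Define I₁(x) := (i/ε)(ε^β x·v − R(x)) U(x). Then ω(I₁, z_{j,0}) = (1/2) ε^{β−1} ρ v_j + (1/(2ε)) ∫_{ℝ^N} R(x) ∂_j(U²)(x) dx for j = 1,…,N, and ω(I₁, z_{j,0}) = 0 for j = N+1,…,2N+1. -/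
open MeasureTheory Real Filter
open scoped BigOperators ENNReal

noncomputable section

namespace NLS

variable {N : ℕ}

section AuxI1

/-- Every Schwartz function has temperate growth. -/
theorem aux_schwartz_temperate {D F : Type*} [NormedAddCommGroup D] [NormedSpace ℝ D]
    [NormedAddCommGroup F] [NormedSpace ℝ F] (f : SchwartzMap D F) :
    Function.HasTemperateGrowth ⇑f := by
  refine ⟨f.smooth', fun n => ⟨0, ?_⟩⟩
  obtain ⟨C, -, hC⟩ := f.decay 0 n
  exact ⟨C, fun x => by simpa using hC x⟩

end AuxI1

/-- Lemma `i1`: pairings of `I₁` with the rescaled tangent vectors. -/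
theorem lemma_I1
    (N : ℕ) (hN : 3 ≤ N) (ε β ρ : ℝ) (hε : 0 < ε) (v : Esp N)
    (U : SchwartzMap (Esp N) ℝ) (hρ : (∫ x, U x ^ 2) = ρ)
    (R : Esp N → ℝ) (hR : Measurable R)
    (h1 : Integrable fun x : Esp N => (1 + ‖x‖) * |R x| * U x ^ 2)
    (h2 : Integrable fun x : Esp N => |R x| * U x * ‖grad ⇑U x‖) :
    (∀ j : Fin N,
        symp (fun x : Esp N =>
            Complex.I / (ε : ℂ) * ((ε ^ β * (inner ℝ x v : ℝ) - R x : ℝ) : ℂ) * ((U x : ℝ) : ℂ))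
          (zA0 ⇑U j)
        = 1 / 2 * ε ^ (β - 1) * ρ * v j
          + 1 / (2 * ε) * ∫ x, R x * pd j (fun y => U y ^ 2) x) ∧
    (∀ j : Fin N,
        symp (fun x : Esp N =>
            Complex.I / (ε : ℂ) * ((ε ^ β * (inner ℝ x v : ℝ) - R x : ℝ) : ℂ) * ((U x : ℝ) : ℂ))
          (zXi0 ⇑U j) = 0) ∧
    symp (fun x : Esp N =>
        Complex.I / (ε : ℂ) * ((ε ^ β * (inner ℝ x v : ℝ) - R x : ℝ) : ℂ) * ((U x : ℝ) : ℂ))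
      (zTh0 ⇑U) = 0 := by
  have hεne : (ε : ℝ) ≠ 0 := ne_of_gt hε
  have hUtg : Function.HasTemperateGrowth ⇑U := aux_schwartz_temperate U
  -- the square of `U` as a Schwartz function
  set Usq : SchwartzMap (Esp N) ℝ :=
    SchwartzMap.bilinLeftCLM (ContinuousLinearMap.mul ℝ ℝ) hUtg U with hUsqdef
  have hUsq : ∀ x, Usq x = U x ^ 2 := fun x => by rw [pow_two]; rfl
  have hUsqfun : (fun y => U y ^ 2) = ⇑Usq := funext fun y => (hUsq y).symm
  set f : Esp N → ℂ := fun x : Esp N =>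
      Complex.I / (ε : ℂ) * ((ε ^ β * (inner ℝ x v : ℝ) - R x : ℝ) : ℂ) * ((U x : ℝ) : ℂ) with hf
  have hfx : ∀ x, f x
      = Complex.I * (((ε⁻¹ * ((ε ^ β * (inner ℝ x v : ℝ) - R x) * U x)) : ℝ) : ℂ) := by
    intro x
    rw [hf]
    push_cast
    field_simp
  -- Part 1
  have part1 : ∀ j : Fin N,
      symp f (zA0 ⇑U j)
        = 1 / 2 * ε ^ (β - 1) * ρ * v j
          + 1 / (2 * ε) * ∫ x, R x * pd j (fun y => U y ^ 2) x := by
    intro j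
    set e : Esp N := EuclideanSpace.single j (1 : ℝ) with he
    set Dsq : SchwartzMap (Esp N) ℝ := LineDeriv.lineDerivOpCLM ℝ (SchwartzMap (Esp N) ℝ) e Usq with hDsqdef
    have hDsq : ∀ x, Dsq x = pd j (fun y => U y ^ 2) x := by
      intro x
      rw [pd, hUsqfun, hDsqdef, LineDeriv.lineDerivOpCLM_apply, SchwartzMap.lineDerivOp_apply_eq_fderiv]
    have hDsqfun : (fun x => pd j (fun y => U y ^ 2) x) = ⇑Dsq := funext fun x => (hDsq x).symm
    have hDsq2 : ∀ x, pd j (fun y => U y ^ 2) x = 2 * U x * pd j (⇑U) x := by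
      intro x
      have hmul : (fun y => U y ^ 2) = fun y => U y * U y := funext fun y => by rw [pow_two]
      have h := (U.differentiableAt (x := x)).hasFDerivAt.mul
        (U.differentiableAt (x := x)).hasFDerivAt
      rw [pd, hmul, show (fun y => U y * U y) = ⇑U * ⇑U from rfl, h.fderiv]
      simp only [ContinuousLinearMap.add_apply, ContinuousLinearMap.coe_smul',
        Pi.smul_apply, smul_eq_mul]
      rw [pd]
      ring
    -- bound on the partial derivative by the gradient norm
    have hpd_le : ∀ x, |pd j (⇑U) x| ≤ ‖grad (⇑U) x‖ := by
      intro x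
      have hcomp : pd j (⇑U) x = (inner ℝ (grad (⇑U) x) e : ℝ) := by
        rw [he, EuclideanSpace.inner_single_right]
        simp [grad]
      rw [hcomp]
      refine (abs_real_inner_le_norm _ _).trans ?_
      simp [he]
    -- integrability of `R * ∂_j(U²)`
    have hRD : Integrable (fun x => R x * pd j (fun y => U y ^ 2) x) := by
      refine Integrable.mono' ((h2.abs.const_mul 2)) ?_ ?_
      · have : AEStronglyMeasurable (fun x : Esp N => pd j (fun y => U y ^ 2) x) volume := by
          rw [hDsqfun]; exact Dsq.continuous.aestronglyMeasurable
        exact hR.aestronglyMeasurable.mul this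
      · filter_upwards with x
        rw [hDsq2 x, Real.norm_eq_abs]
        have habs : |R x * (2 * U x * pd j (⇑U) x)|
            = 2 * (|R x| * (|U x| * |pd j (⇑U) x|)) := by
          rw [abs_mul, abs_mul, abs_mul]
          simp [abs_of_nonneg]
          ring
        have habs2 : |(|R x| * U x * ‖grad (⇑U) x‖)|
            = |R x| * (|U x| * ‖grad (⇑U) x‖) := by
          rw [abs_mul, abs_mul, abs_abs, abs_of_nonneg (norm_nonneg _)]
          ring
        rw [habs, habs2]
        gcongr
        exact hpd_le x
    -- the inner product with `v` as a continuous linear map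
    set L : Esp N →L[ℝ] ℝ := innerSL ℝ v with hL
    have hLx : ∀ x : Esp N, L x = (inner ℝ x v : ℝ) := by
      intro x
      rw [hL, innerSL_apply_apply]
      exact real_inner_comm x v
    have hLe : L e = v j := by
      rw [hL, he]
      simp only [innerSL_apply_apply]
      rw [EuclideanSpace.inner_single_right]
      simp
    -- Schwartz products for integrability
    set P1 : SchwartzMap (Esp N) ℝ :=
      SchwartzMap.bilinLeftCLM (ContinuousLinearMap.mul ℝ ℝ) L.hasTemperateGrowth Dsq with hP1
    have hP1x : ∀ x, P1 x = Dsq x * L x := fun _ => rfl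
    set P2 : SchwartzMap (Esp N) ℝ :=
      SchwartzMap.bilinLeftCLM (ContinuousLinearMap.mul ℝ ℝ) L.hasTemperateGrowth Usq with hP2
    have hP2x : ∀ x, P2 x = Usq x * L x := fun _ => rfl
    have hxvD : Integrable (fun x : Esp N => (inner ℝ x v : ℝ) * pd j (fun y => U y ^ 2) x) := by
      refine P1.integrable.congr (Filter.Eventually.of_forall fun x => ?_)
      rw [hP1x, hDsq, hLx, mul_comm]
    -- integration by parts
    have hibp : (∫ x : Esp N, (inner ℝ x v : ℝ) * pd j (fun y => U y ^ 2) x) = -(v j * ρ) := by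
      have hfd : ∀ x : Esp N, pd j (fun y => U y ^ 2) x = fderiv ℝ (⇑Usq) x e := by
        intro x
        rw [← hDsq, hDsqdef, LineDeriv.lineDerivOpCLM_apply, SchwartzMap.lineDerivOp_apply_eq_fderiv]
      have step1 : (∫ x : Esp N, (inner ℝ x v : ℝ) * pd j (fun y => U y ^ 2) x)
          = ∫ x : Esp N, L x * fderiv ℝ (⇑Usq) x e := by
        congr 1
        funext x
        rw [hLx, hfd]
      rw [step1]
      have hf'g : Integrable (fun x : Esp N => fderiv ℝ (⇑L) x e * Usq x) := by
        simpa [ContinuousLinearMap.fderiv] using Usq.integrable.const_mul (L e)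
      have hfg' : Integrable (fun x : Esp N => L x * fderiv ℝ (⇑Usq) x e) := by
        refine P1.integrable.congr (Filter.Eventually.of_forall fun x => ?_)
        rw [hP1x, hDsqdef, LineDeriv.lineDerivOpCLM_apply, SchwartzMap.lineDerivOp_apply_eq_fderiv, mul_comm]
      have hfg : Integrable (fun x : Esp N => L x * Usq x) := by
        refine P2.integrable.congr (Filter.Eventually.of_forall fun x => ?_)
        rw [hP2x, mul_comm]
      rw [integral_mul_fderiv_eq_neg_fderiv_mul_of_integrable hf'g hfg' hfg
        (fun x _ => L.differentiable x) (fun x _ => Usq.differentiable x)]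
      have : (∫ x : Esp N, fderiv ℝ (⇑L) x e * Usq x) = v j * ρ := by
        have : (∫ x : Esp N, fderiv ℝ (⇑L) x e * Usq x) = ∫ x : Esp N, v j * Usq x := by
          congr 1
          funext x
          rw [ContinuousLinearMap.fderiv, hLe]
        rw [this, integral_const_mul, ← hUsqfun, hρ]
      rw [this]
    -- put everything together
    have key : ∀ x : Esp N, f x * (starRingEnd ℂ) (zA0 ⇑U j x)
        = Complex.I * (((ε⁻¹ * ((ε ^ β * (inner ℝ x v : ℝ) - R x) * (U x * (-(pd j (⇑U) x))))) : ℝ) : ℂ) := by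
      intro x
      rw [hf, zA0]
      rw [show (starRingEnd ℂ) (-((pd j (⇑U) x : ℝ) : ℂ)) = -((pd j (⇑U) x : ℝ) : ℂ) by
        rw [map_neg, Complex.conj_ofReal]]
      push_cast
      field_simp
    have hcsplit : ∀ x : Esp N,
        ε⁻¹ * ((ε ^ β * (inner ℝ x v : ℝ) - R x) * (U x * (-(pd j (⇑U) x))))
          = (-(ε ^ (β - 1)) / 2) * ((inner ℝ x v : ℝ) * pd j (fun y => U y ^ 2) x)
            + (1 / (2 * ε)) * (R x * pd j (fun y => U y ^ 2) x) := by
      intro x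
      rw [hDsq2 x]
      rw [show ε ^ (β - 1) = ε ^ β / ε by
        rw [Real.rpow_sub hε, Real.rpow_one]]
      field_simp
      ring
    have hint1 : Integrable (fun x : Esp N =>
        (-(ε ^ (β - 1)) / 2) * ((inner ℝ x v : ℝ) * pd j (fun y => U y ^ 2) x)) :=
      hxvD.const_mul _
    have hint2 : Integrable (fun x : Esp N =>
        (1 / (2 * ε)) * (R x * pd j (fun y => U y ^ 2) x)) := hRD.const_mul _
    rw [symp]
    rw [show (fun x : Esp N => f x * (starRingEnd ℂ) (zA0 ⇑U j x))
        = fun x : Esp N => Complex.I *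
          (((ε⁻¹ * ((ε ^ β * (inner ℝ x v : ℝ) - R x) * (U x * (-(pd j (⇑U) x))))) : ℝ) : ℂ)
      from funext key]
    rw [integral_const_mul]
    rw [show (∫ x : Esp N,
        ((ε⁻¹ * ((ε ^ β * (inner ℝ x v : ℝ) - R x) * (U x * (-(pd j (⇑U) x)))) : ℝ) : ℂ))
      = (((∫ x : Esp N,
          ε⁻¹ * ((ε ^ β * (inner ℝ x v : ℝ) - R x) * (U x * (-(pd j (⇑U) x)))) : ℝ)) : ℂ)
      from integral_ofReal]
    simp only [Complex.mul_im, Complex.I_re, Complex.I_im, Complex.ofReal_re,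
      Complex.ofReal_im, zero_mul, one_mul, mul_zero, add_zero, zero_add]
    rw [show (fun x : Esp N =>
        ε⁻¹ * ((ε ^ β * (inner ℝ x v : ℝ) - R x) * (U x * (-(pd j (⇑U) x)))))
        = fun x : Esp N =>
          (-(ε ^ (β - 1)) / 2) * ((inner ℝ x v : ℝ) * pd j (fun y => U y ^ 2) x)
            + (1 / (2 * ε)) * (R x * pd j (fun y => U y ^ 2) x)
      from funext hcsplit]
    rw [integral_add hint1 hint2, integral_const_mul, integral_const_mul, hibp]
    ring
  -- Part 2
  have part2 : ∀ j : Fin N, symp f (zXi0 ⇑U j) = 0 := by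
    intro j
    have key : ∀ x : Esp N, f x * (starRingEnd ℂ) (zXi0 ⇑U j x)
        = (((ε⁻¹ * ((ε ^ β * (inner ℝ x v : ℝ) - R x) * U x) * (x j * U x / 2)) : ℝ) : ℂ) := by
      intro x
      rw [hfx, zXi0]
      rw [show (starRingEnd ℂ) (Complex.I / 2 * ((x j : ℝ) : ℂ) * ((U x : ℝ) : ℂ))
          = -Complex.I / 2 * ((x j : ℝ) : ℂ) * ((U x : ℝ) : ℂ) by
        simp [map_mul, map_div₀, Complex.conj_ofReal, map_ofNat]]
      have hII : Complex.I * -Complex.I = 1 := by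
        rw [mul_neg, Complex.I_mul_I, neg_neg]
      calc Complex.I * (((ε⁻¹ * ((ε ^ β * (inner ℝ x v : ℝ) - R x) * U x)) : ℝ) : ℂ)
            * (-Complex.I / 2 * ((x j : ℝ) : ℂ) * ((U x : ℝ) : ℂ))
          = (Complex.I * -Complex.I) * ((((ε⁻¹ * ((ε ^ β * (inner ℝ x v : ℝ) - R x) * U x)) : ℝ) : ℂ)
            * (((x j : ℝ) : ℂ) * ((U x : ℝ) : ℂ) / 2)) := by ring
        _ = _ := by rw [hII]; push_cast; ring
    rw [symp]
    rw [show (fun x : Esp N => f x * (starRingEnd ℂ) (zXi0 ⇑U j x))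
        = fun x : Esp N =>
          (((ε⁻¹ * ((ε ^ β * (inner ℝ x v : ℝ) - R x) * U x) * (x j * U x / 2)) : ℝ) : ℂ)
      from funext key]
    rw [show (∫ x : Esp N,
        ((ε⁻¹ * ((ε ^ β * (inner ℝ x v : ℝ) - R x) * U x) * (x j * U x / 2) : ℝ) : ℂ))
      = (((∫ x : Esp N, ε⁻¹ * ((ε ^ β * (inner ℝ x v : ℝ) - R x) * U x) * (x j * U x / 2) : ℝ)) : ℂ)
      from integral_ofReal]
    exact Complex.ofReal_im _
  -- Part 3
  have part3 : symp f (zTh0 ⇑U) = 0 := by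
    have key : ∀ x : Esp N, f x * (starRingEnd ℂ) (zTh0 ⇑U x)
        = (((ε⁻¹ * ((ε ^ β * (inner ℝ x v : ℝ) - R x) * U x) * U x) : ℝ) : ℂ) := by
      intro x
      rw [hfx, zTh0]
      rw [show (starRingEnd ℂ) (Complex.I * ((U x : ℝ) : ℂ))
          = -Complex.I * ((U x : ℝ) : ℂ) by
        simp [map_mul, Complex.conj_ofReal]]
      have hII : Complex.I * -Complex.I = 1 := by
        rw [mul_neg, Complex.I_mul_I, neg_neg]
      calc Complex.I * (((ε⁻¹ * ((ε ^ β * (inner ℝ x v : ℝ) - R x) * U x)) : ℝ) : ℂ)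
            * (-Complex.I * ((U x : ℝ) : ℂ))
          = (Complex.I * -Complex.I) * ((((ε⁻¹ * ((ε ^ β * (inner ℝ x v : ℝ) - R x) * U x)) : ℝ) : ℂ)
            * ((U x : ℝ) : ℂ)) := by ring
        _ = _ := by rw [hII]; push_cast; ring
    rw [symp]
    rw [show (fun x : Esp N => f x * (starRingEnd ℂ) (zTh0 ⇑U x))
        = fun x : Esp N =>
          (((ε⁻¹ * ((ε ^ β * (inner ℝ x v : ℝ) - R x) * U x) * U x) : ℝ) : ℂ)
      from funext key]
    rw [show (∫ x : Esp N,
        ((ε⁻¹ * ((ε ^ β * (inner ℝ x v : ℝ) - R x) * U x) * U x : ℝ) : ℂ))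
      = (((∫ x : Esp N, ε⁻¹ * ((ε ^ β * (inner ℝ x v : ℝ) - R x) * U x) * U x : ℝ)) : ℂ)
      from integral_ofReal]
    exact Complex.ofReal_im _
  exact ⟨part1, part2, part3⟩
end NLS
end
end

section
/- Let N ≥ 3, ε > 0, β, ω ∈ ℝ. Let f : (0,∞) → ℝ be C¹ and let U : ℝ^N → ℝ be a positive Schwartz function solving −ΔU + f(U²)U − ωU = 0 on ℝ^N, such that f(U²) and f'(U²)U² are bounded functions. Let w̃ : ℝ^N → ℂ be a Schwartz function, and define I₃(x) := i ε^{1−2β} [ Δw̃(x) + ω w̃(x) − (2 f'(U²(x)) U²(x) + f(U²(x))) Re(w̃(x)) − i f(U²(x)) Im(w̃(x)) ]. Then ω(I₃, z_{j,0}) = 0 for j = 1,…,N, ω(I₃, z_{N+j,0}) = −ε^{1−2β} ω(w̃, z_{j,0}) for j = 1,…,N, and ω(I₃, z_{2N+1,0}) = 0. -/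
open MeasureTheory Real Filter
open scoped BigOperators ENNReal

noncomputable section

namespace NLS

variable {N : ℕ}

section Helpers

variable {N : ℕ}

variable {F : Type} [NormedAddCommGroup F] [NormedSpace ℝ F]

/-- partial derivative as a Schwartz map. -/
def pdS (j : Fin N) (φ : SchwartzMap (Esp N) F) : SchwartzMap (Esp N) F :=
  LineDeriv.lineDerivOpCLM ℝ (SchwartzMap (Esp N) F) (EuclideanSpace.single j (1:ℝ)) φ

lemma pdS_apply (j : Fin N) (φ : SchwartzMap (Esp N) F) (x : Esp N) :
    pdS j φ x = fderiv ℝ ⇑φ x (EuclideanSpace.single j 1) :=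
  rfl

lemma pd_coe (j : Fin N) (φ : SchwartzMap (Esp N) ℝ) : pd j ⇑φ = ⇑(pdS j φ) :=
  funext fun x => (pdS_apply j φ x).symm

lemma pdC_coe (j : Fin N) (φ : SchwartzMap (Esp N) ℂ) : pdC j ⇑φ = ⇑(pdS j φ) :=
  funext fun x => (pdS_apply j φ x).symm

/-- bounded × Schwartz is integrable (real version). -/
lemma integrable_bdd_mul {g : Esp N → ℝ} (hg : AEStronglyMeasurable g volume) {C : ℝ}
    (hC : ∀ x, |g x| ≤ C) (φ : SchwartzMap (Esp N) ℝ) :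
    Integrable (fun x => g x * φ x) volume :=
  φ.integrable.bdd_mul hg (ae_of_all _ fun x => by simpa [Real.norm_eq_abs] using hC x)

/-- bounded × Schwartz is integrable (complex version). -/
lemma integrable_bdd_mul_C {g : Esp N → ℂ} (hg : AEStronglyMeasurable g volume) {C : ℝ}
    (hC : ∀ x, ‖g x‖ ≤ C) (φ : SchwartzMap (Esp N) ℝ) :
    Integrable (fun x => g x * ((φ x : ℝ) : ℂ)) volume :=
  (φ.integrable.ofReal (𝕜 := ℂ)).bdd_mul hg (ae_of_all _ hC)

lemma schwartz_bdd (φ : SchwartzMap (Esp N) F) : ∃ C, ∀ x, ‖φ x‖ ≤ C :=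
  ⟨SchwartzMap.seminorm ℝ 0 0 φ, fun x => φ.norm_le_seminorm ℝ x⟩

end Helpers
section Swap

variable {N : ℕ}

lemma fderiv_differentiable (φ : SchwartzMap (Esp N) ℝ) :
    Differentiable ℝ (fderiv ℝ ⇑φ) :=
  ((contDiff_infty_iff_fderiv.mp (φ.smooth (⊤ : ℕ∞))).2).differentiable
    (by simp)

lemma pd_pd_eq_fderiv2 (φ : SchwartzMap (Esp N) ℝ) (j k : Fin N) (x : Esp N) :
    pd j (pd k ⇑φ) x
      = fderiv ℝ (fderiv ℝ ⇑φ) x (EuclideanSpace.single j 1) (EuclideanSpace.single k 1) := by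
  have hd : DifferentiableAt ℝ (fderiv ℝ ⇑φ) x := (fderiv_differentiable φ).differentiableAt
  have h := (ContinuousLinearMap.apply ℝ ℝ
      (EuclideanSpace.single k (1:ℝ))).hasFDerivAt.comp x hd.hasFDerivAt
  have hc : pd k ⇑φ = ⇑(ContinuousLinearMap.apply ℝ ℝ (EuclideanSpace.single k (1:ℝ)))
      ∘ fderiv ℝ ⇑φ := rfl
  simp only [pd, hc, h.fderiv, ContinuousLinearMap.coe_comp', Function.comp_apply,
    ContinuousLinearMap.apply_apply]

lemma pd_swap (φ : SchwartzMap (Esp N) ℝ) (j k : Fin N) (x : Esp N) :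
    pd j (pd k ⇑φ) x = pd k (pd j ⇑φ) x := by
  rw [pd_pd_eq_fderiv2, pd_pd_eq_fderiv2]
  exact second_derivative_symmetric
    (fun y => φ.differentiable.differentiableAt.hasFDerivAt)
    ((fderiv_differentiable φ).differentiableAt.hasFDerivAt) _ _

lemma coe_sum {s : Finset (Fin N)} {f : Fin N → SchwartzMap (Esp N) ℝ} :
    ⇑(∑ j ∈ s, f j) = ∑ j ∈ s, ⇑(f j) :=
  map_sum (FunLike.coeAddMonoidHom (SchwartzMap (Esp N) ℝ) (Esp N) ℝ) _ _

lemma pdS_sum (j : Fin N) {s : Finset (Fin N)} {f : Fin N → SchwartzMap (Esp N) ℝ} :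
    pdS j (∑ k ∈ s, f k) = ∑ k ∈ s, pdS j (f k) := by
  simp only [pdS, map_sum]

lemma lapR_coe (φ : SchwartzMap (Esp N) ℝ) :
    lapR ⇑φ = ⇑(∑ j, pdS j (pdS j φ)) := by
  funext x
  rw [coe_sum, Finset.sum_apply]
  simp only [lapR]
  exact Finset.sum_congr rfl fun j _ => by rw [pd_coe, pd_coe]

lemma pd_lap_swap (φ : SchwartzMap (Esp N) ℝ) (j : Fin N) (x : Esp N) :
    pd j (lapR ⇑φ) x = lapR (pd j ⇑φ) x := by
  rw [lapR_coe φ, pd_coe, pdS_sum, coe_sum, Finset.sum_apply]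
  have h2 : ∀ k, pdS j (pdS k (pdS k φ)) x = pd k (pd k (pd j ⇑φ)) x := by
    intro k
    have e1 : pdS j (pdS k (pdS k φ)) x = pd j (pd k ⇑(pdS k φ)) x := by
      rw [pd_coe, pd_coe]
    rw [e1, pd_swap (pdS k φ) j k]
    have e2 : pd j ⇑(pdS k φ) = pd k (pd j ⇑φ) := by
      rw [← pd_coe]
      exact funext fun y => pd_swap φ j k y
    rw [e2]
  simp only [lapR]
  exact Finset.sum_congr rfl fun k _ => h2 k

end Swap
section Green

variable {N : ℕ}

lemma green_j (g : Esp N → ℝ)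
    (hgd : Differentiable ℝ g)
    (hgd1 : ∀ k : Fin N, Differentiable ℝ (pd k g))
    (hb0 : ∃ C, ∀ x, |g x| ≤ C)
    (hb1 : ∀ k : Fin N, ∃ C, ∀ x, |pd k g x| ≤ C)
    (hb2 : ∀ k : Fin N, ∃ C, ∀ x, |pd k (pd k g) x| ≤ C)
    (hc2 : ∀ k : Fin N, Continuous (pd k (pd k g)))
    (φ : SchwartzMap (Esp N) ℝ) (j : Fin N) :
    ∫ x, pd j (pd j g) x * φ x = ∫ x, g x * pd j (pd j ⇑φ) x := by
  obtain ⟨C0, hC0⟩ := hb0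
  obtain ⟨C1, hC1⟩ := hb1 j
  obtain ⟨C2, hC2⟩ := hb2 j
  have hmg : AEStronglyMeasurable g volume := hgd.continuous.aestronglyMeasurable
  have hm1 : AEStronglyMeasurable (pd j g) volume :=
    (hgd1 j).continuous.aestronglyMeasurable
  have hm2 : AEStronglyMeasurable (pd j (pd j g)) volume :=
    (hc2 j).aestronglyMeasurable
  -- rewrite φ-derivatives as Schwartz maps
  have hφ1 : pd j ⇑φ = ⇑(pdS j φ) := pd_coe j φ
  have hφ2 : pd j (pd j ⇑φ) = ⇑(pdS j (pdS j φ)) := by rw [hφ1, pd_coe]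
  -- first integration by parts : ∫ (∂²g) φ = - ∫ (∂g)(∂φ)
  have I1 : ∫ x, pd j g x * fderiv ℝ (⇑φ) x (EuclideanSpace.single j 1)
      = - ∫ x, fderiv ℝ (pd j g) x (EuclideanSpace.single j 1) * φ x := by
    refine integral_mul_fderiv_eq_neg_fderiv_mul_of_integrable ?_ ?_ ?_ (fun x _ => hgd1 j x) (fun x _ => φ.differentiable x)
    · exact integrable_bdd_mul hm2 hC2 φ
    · have := integrable_bdd_mul hm1 hC1 (pdS j φ)
      simpa [← hφ1, pd] using this
    · exact integrable_bdd_mul hm1 hC1 φ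
  -- second integration by parts : ∫ g (∂²φ) = - ∫ (∂g)(∂φ)
  have I2 : ∫ x, g x * fderiv ℝ (⇑(pdS j φ)) x (EuclideanSpace.single j 1)
      = - ∫ x, fderiv ℝ g x (EuclideanSpace.single j 1) * (pdS j φ) x := by
    refine integral_mul_fderiv_eq_neg_fderiv_mul_of_integrable ?_ ?_ ?_ (fun x _ => hgd x)
      (fun x _ => (pdS j φ).differentiable x)
    · have := integrable_bdd_mul hm1 hC1 (pdS j φ)
      simpa [pd] using this
    · have := integrable_bdd_mul hmg hC0 (pdS j (pdS j φ))
      simpa [← hφ2, pd, hφ1] using this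
    · exact integrable_bdd_mul hmg hC0 (pdS j φ)
  have e1 : ∫ x, pd j g x * fderiv ℝ (⇑φ) x (EuclideanSpace.single j 1)
      = ∫ x, fderiv ℝ g x (EuclideanSpace.single j 1) * (pdS j φ) x := by
    simp only [pd, ← hφ1]
  have e2 : ∫ x, fderiv ℝ (pd j g) x (EuclideanSpace.single j 1) * φ x
      = ∫ x, pd j (pd j g) x * φ x := by simp only [pd]
  have e3 : ∫ x, g x * fderiv ℝ (⇑(pdS j φ)) x (EuclideanSpace.single j 1)
      = ∫ x, g x * pd j (pd j ⇑φ) x := by simp only [pd, hφ2, hφ1]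
  rw [e1, e2] at I1
  rw [e3] at I2
  rw [I2, I1, neg_neg]

theorem green (g : Esp N → ℝ)
    (hgd : Differentiable ℝ g)
    (hgd1 : ∀ k : Fin N, Differentiable ℝ (pd k g))
    (hb0 : ∃ C, ∀ x, |g x| ≤ C)
    (hb1 : ∀ k : Fin N, ∃ C, ∀ x, |pd k g x| ≤ C)
    (hb2 : ∀ k : Fin N, ∃ C, ∀ x, |pd k (pd k g) x| ≤ C)
    (hc2 : ∀ k : Fin N, Continuous (pd k (pd k g)))
    (φ : SchwartzMap (Esp N) ℝ) :
    ∫ x, lapR g x * φ x = ∫ x, g x * lapR ⇑φ x := by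
  have lhs : ∫ x, lapR g x * φ x = ∑ j, ∫ x, pd j (pd j g) x * φ x := by
    rw [← integral_finset_sum]
    · simp only [lapR, Finset.sum_mul]
    · intro j _
      obtain ⟨C2, hC2⟩ := hb2 j
      exact integrable_bdd_mul (hc2 j).aestronglyMeasurable hC2 φ
  have rhs : ∫ x, g x * lapR ⇑φ x = ∑ j, ∫ x, g x * pd j (pd j ⇑φ) x := by
    rw [← integral_finset_sum]
    · simp only [lapR, Finset.mul_sum]
    · intro j _
      obtain ⟨C0, hC0⟩ := hb0
      have hφ2 : pd j (pd j ⇑φ) = ⇑(pdS j (pdS j φ)) := by rw [pd_coe, pd_coe]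
      have := integrable_bdd_mul hgd.continuous.aestronglyMeasurable hC0 (pdS j (pdS j φ))
      simpa [← hφ2] using this
  rw [lhs, rhs]
  exact Finset.sum_congr rfl fun j _ => green_j g hgd hgd1 hb0 hb1 hb2 hc2 φ j

end Green
section Elliptic

variable {N : ℕ}

lemma Lplus_eq (f : ℝ → ℝ) (hf : ContDiffOn ℝ 1 f (Set.Ioi 0)) (ω : ℝ)
    (U : SchwartzMap (Esp N) ℝ) (hUpos : ∀ x, 0 < U x)
    (hell : ∀ x, -lapR ⇑U x + f (U x ^ 2) * U x - ω * U x = 0) (j : Fin N) (x : Esp N) :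
    lapR (pd j ⇑U) x
      = (2 * deriv f (U x ^ 2) * U x ^ 2 + f (U x ^ 2) - ω) * pd j ⇑U x := by
  have heq : lapR ⇑U = fun y => f (U y ^ 2) * U y - ω * U y := by
    funext y; have := hell y; linarith
  rw [← pd_lap_swap U j x, heq]
  have hU' : HasFDerivAt ⇑U (fderiv ℝ ⇑U x) x :=
    U.differentiable.differentiableAt.hasFDerivAt
  have hU2 : HasFDerivAt (fun y => U y ^ 2)
      (U x • fderiv ℝ ⇑U x + U x • fderiv ℝ ⇑U x) x := by
    exact (hU'.mul hU').congr_of_eventuallyEq (Filter.Eventually.of_forall fun y => pow_two _)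
  have hdf : DifferentiableAt ℝ f (U x ^ 2) :=
    (hf.differentiableOn one_ne_zero).differentiableAt
      (isOpen_Ioi.mem_nhds (Set.mem_Ioi.mpr (pow_pos (hUpos x) 2)))
  have hfc : HasFDerivAt (fun y => f (U y ^ 2))
      (deriv f (U x ^ 2) • (U x • fderiv ℝ ⇑U x + U x • fderiv ℝ ⇑U x)) x :=
    hdf.hasDerivAt.comp_hasFDerivAt x hU2
  have hfull := (hfc.mul hU').sub (hU'.const_mul ω)
  have : fderiv ℝ (fun y => f (U y ^ 2) * U y - ω * U y) x = _ := hfull.fderiv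
  simp only [pd, this]
  simp only [ContinuousLinearMap.coe_sub', Pi.sub_apply, ContinuousLinearMap.add_apply,
    ContinuousLinearMap.coe_smul', Pi.smul_apply, smul_eq_mul, Nat.cast_ofNat, pow_one]
  ring

lemma pd_coordMul (U : SchwartzMap (Esp N) ℝ) (j k : Fin N) (x : Esp N) :
    pd k (fun y => y j * U y) x
      = x j * pd k ⇑U x + (EuclideanSpace.single k (1:ℝ)) j * U x := by
  have hp : HasFDerivAt (fun y : Esp N => y j)
      (EuclideanSpace.proj (𝕜 := ℝ) j) x := (EuclideanSpace.proj (𝕜 := ℝ) j).hasFDerivAt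
  have hU' : HasFDerivAt ⇑U (fderiv ℝ ⇑U x) x :=
    U.differentiable.differentiableAt.hasFDerivAt
  have h := hp.mul hU'
  have : fderiv ℝ (fun y : Esp N => y j * U y) x = _ := h.fderiv
  simp only [pd, this, ContinuousLinearMap.add_apply, ContinuousLinearMap.coe_smul',
    Pi.smul_apply, smul_eq_mul]
  ring_nf
  rfl

end Elliptic
section CoordMul

variable {N : ℕ}

/-- `x ↦ U x * x j` as a Schwartz map. -/
def coordMul (j : Fin N) (U : SchwartzMap (Esp N) ℝ) : SchwartzMap (Esp N) ℝ :=
  SchwartzMap.bilinLeftCLM (ContinuousLinearMap.mul ℝ ℝ)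
    (EuclideanSpace.proj (𝕜 := ℝ) j).hasTemperateGrowth U

lemma coordMul_apply (j : Fin N) (U : SchwartzMap (Esp N) ℝ) (x : Esp N) :
    coordMul j U x = U x * x j := rfl

lemma coordMul_coe (j : Fin N) (U : SchwartzMap (Esp N) ℝ) :
    ⇑(coordMul j U) = fun y : Esp N => y j * U y := by
  funext y; rw [coordMul_apply, mul_comm]

lemma lap_coordMul (U : SchwartzMap (Esp N) ℝ) (j : Fin N) (x : Esp N) :
    lapR ⇑(coordMul j U) x = x j * lapR ⇑U x + 2 * pd j ⇑U x := by
  rw [coordMul_coe]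
  have hpd : ∀ k : Fin N, pd k (fun y : Esp N => y j * U y)
      = fun y => y j * pdS k U y + (EuclideanSpace.single k (1:ℝ)) j * U y := by
    intro k
    funext y
    rw [pd_coordMul U j k y, pdS_apply]
    rfl
  have hterm : ∀ k : Fin N, pd k (pd k (fun y : Esp N => y j * U y)) x
      = x j * pd k (pd k ⇑U) x + 2 * (EuclideanSpace.single k (1:ℝ)) j * pd k ⇑U x := by
    intro k
    rw [hpd k]
    have h1 : HasFDerivAt (fun y : Esp N => y j * pdS k U y)
        (x j • fderiv ℝ ⇑(pdS k U) x + pdS k U x • EuclideanSpace.proj (𝕜 := ℝ) j) x :=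
      (EuclideanSpace.proj (𝕜 := ℝ) j).hasFDerivAt.mul
        (pdS k U).differentiable.differentiableAt.hasFDerivAt
    have h2 : HasFDerivAt (fun y : Esp N => (EuclideanSpace.single k (1:ℝ)) j * U y)
        ((EuclideanSpace.single k (1:ℝ)) j • fderiv ℝ ⇑U x) x := by
      simpa [smul_eq_mul] using
        (U.differentiable.differentiableAt.hasFDerivAt.const_mul
          ((EuclideanSpace.single k (1:ℝ)) j))
    have h := h1.add h2
    have hfd : fderiv ℝ (fun y : Esp N => y j * pdS k U y
        + (EuclideanSpace.single k (1:ℝ)) j * U y) x = _ := h.fderiv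
    simp only [pd, hfd, ContinuousLinearMap.add_apply, ContinuousLinearMap.coe_smul',
      Pi.smul_apply, smul_eq_mul]
    rw [pd_coe k U]
    rw [show (fderiv ℝ (⇑U) x) (EuclideanSpace.single k 1) = pdS k U x from
      (pdS_apply k U x).symm]
    rw [show (EuclideanSpace.proj (𝕜 := ℝ) j) (EuclideanSpace.single k (1:ℝ))
        = (EuclideanSpace.single k (1:ℝ)) j from rfl]
    ring
  simp only [lapR]
  have : ∑ k, pd k (pd k (fun y : Esp N => y j * U y)) x
      = ∑ k : Fin N, (x j * pd k (pd k ⇑U) x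
          + 2 * (EuclideanSpace.single k (1:ℝ)) j * pd k ⇑U x) :=
    Finset.sum_congr rfl fun k _ => hterm k
  rw [this, Finset.sum_add_distrib, ← Finset.mul_sum]
  congr 1
  have : ∀ k : Fin N, 2 * (EuclideanSpace.single k (1:ℝ)) j * pd k ⇑U x
      = if j = k then 2 * pd k ⇑U x else 0 := by
    intro k
    rw [EuclideanSpace.single_apply]
    by_cases h : j = k <;> simp [h]
  rw [Finset.sum_congr rfl fun k _ => this k, Finset.sum_ite_eq]
  simp

end CoordMul
section ReIm

variable {N : ℕ}

lemma pd_L (L : ℂ →L[ℝ] ℝ) (φ : SchwartzMap (Esp N) ℂ) (k : Fin N) :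
    pd k (fun y => L (φ y)) = fun y => L (pdS k φ y) := by
  funext x
  have h := (L.hasFDerivAt.comp x φ.differentiable.differentiableAt.hasFDerivAt).fderiv
  have hc : (fun y => L (φ y)) = ⇑L ∘ ⇑φ := rfl
  simp only [pd, hc, h, ContinuousLinearMap.coe_comp', Function.comp_apply]
  rw [pdS_apply]

lemma lap_L (L : ℂ →L[ℝ] ℝ) (w : SchwartzMap (Esp N) ℂ) (x : Esp N) :
    lapR (fun y => L (w y)) x = L (lapC ⇑w x) := by
  simp only [lapR, lapC]
  rw [map_sum]
  refine Finset.sum_congr rfl fun k _ => ?_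
  rw [pd_L L w k]
  have h2 := pd_L L (pdS k w) k
  have : pd k (fun y => L ((pdS k w) y)) x = L (pdS k (pdS k w) x) := by
    rw [h2]
  rw [this, pdC_coe k w]
  congr 1

lemma green_L (L : ℂ →L[ℝ] ℝ) (hL : ∀ z, |L z| ≤ ‖z‖) (w : SchwartzMap (Esp N) ℂ)
    (φ : SchwartzMap (Esp N) ℝ) :
    ∫ x, lapR (fun y => L (w y)) x * φ x = ∫ x, L (w x) * lapR ⇑φ x := by
  refine green (fun y => L (w y)) ?_ ?_ ?_ ?_ ?_ ?_ φ
  · exact L.differentiable.comp w.differentiable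
  · intro k; rw [pd_L L w k]
    exact L.differentiable.comp (pdS k w).differentiable
  · obtain ⟨C, hC⟩ := schwartz_bdd w
    exact ⟨C, fun x => (hL _).trans (hC x)⟩
  · intro k; rw [pd_L L w k]
    obtain ⟨C, hC⟩ := schwartz_bdd (pdS k w)
    exact ⟨C, fun x => (hL _).trans (hC x)⟩
  · intro k
    rw [pd_L L w k]
    have h2 : pd k (fun y => L ((pdS k w) y)) = fun y => L (pdS k (pdS k w) y) :=
      pd_L L (pdS k w) k
    rw [h2]
    obtain ⟨C, hC⟩ := schwartz_bdd (pdS k (pdS k w))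
    exact ⟨C, fun x => (hL _).trans (hC x)⟩
  · intro k
    rw [pd_L L w k, pd_L L (pdS k w) k]
    exact L.continuous.comp (pdS k (pdS k w)).continuous

end ReIm
section Master

variable {N : ℕ}

lemma coe_sumC {s : Finset (Fin N)} {f : Fin N → SchwartzMap (Esp N) ℂ} :
    ⇑(∑ j ∈ s, f j) = ∑ j ∈ s, ⇑(f j) :=
  map_sum (FunLike.coeAddMonoidHom (SchwartzMap (Esp N) ℂ) (Esp N) ℂ) _ _

lemma lapC_coe (w : SchwartzMap (Esp N) ℂ) :
    lapC ⇑w = ⇑(∑ j, pdS j (pdS j w)) := by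
  funext x
  rw [coe_sumC, Finset.sum_apply]
  simp only [lapC]
  refine Finset.sum_congr rfl fun j _ => ?_
  rw [pdC_coe j w, pdC_coe]

lemma im_integral {h : Esp N → ℂ} (hi : Integrable h volume) :
    (∫ x, h x).im = ∫ x, (h x).im :=
  (Complex.imCLM.integral_comp_comm hi).symm

end Master
section MasterLemma

variable {N : ℕ}

lemma mul_ofReal_im (z : ℂ) (r : ℝ) : (z * (r : ℂ)).im = z.im * r := by
  simp [Complex.mul_im]

lemma master (c ω p q : ℝ) (f : ℝ → ℝ) (hf : ContDiffOn ℝ 1 f (Set.Ioi 0))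
    (U : SchwartzMap (Esp N) ℝ) (hUpos : ∀ x, 0 < U x) (M : ℝ)
    (hM : ∀ x, |f (U x ^ 2)| ≤ M ∧ |deriv f (U x ^ 2) * U x ^ 2| ≤ M)
    (w : SchwartzMap (Esp N) ℂ) (φ : SchwartzMap (Esp N) ℝ)
    (ζ : ℂ) (hq : ζ.re = q) (hp : ζ.im = -p) :
    (∫ x, (Complex.I * (c : ℂ) * (lapC ⇑w x + ((ω : ℝ) : ℂ) * w x
        - ((2 * deriv f (U x ^ 2) * U x ^ 2 + f (U x ^ 2) : ℝ) : ℂ) * (((w x).re : ℝ) : ℂ)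
        - Complex.I * ((f (U x ^ 2) : ℝ) : ℂ) * (((w x).im : ℝ) : ℂ)))
        * (ζ * ((φ x : ℝ) : ℂ))).im
    = c * (p * ((∫ x, (w x).im * lapR ⇑φ x) + ω * (∫ x, (w x).im * φ x)
              - ∫ x, (f (U x ^ 2) * (w x).im) * φ x)
         + q * ((∫ x, (w x).re * lapR ⇑φ x) + ω * (∫ x, (w x).re * φ x)
              - ∫ x, ((2 * deriv f (U x ^ 2) * U x ^ 2 + f (U x ^ 2)) * (w x).re) * φ x)) := by
  -- continuity facts
  have hU2 : ∀ x : Esp N, U x ^ 2 ∈ Set.Ioi (0:ℝ) :=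
    fun x => Set.mem_Ioi.mpr (pow_pos (hUpos x) 2)
  have hBf_cont : Continuous fun x : Esp N => f (U x ^ 2) :=
    hf.continuousOn.comp_continuous (U.continuous.pow 2) hU2
  have hd_cont : Continuous fun x : Esp N => deriv f (U x ^ 2) * U x ^ 2 :=
    ((hf.continuousOn_deriv_of_isOpen isOpen_Ioi le_rfl).comp_continuous
      (U.continuous.pow 2) hU2).mul (U.continuous.pow 2)
  have hA_cont : Continuous fun x : Esp N =>
      2 * deriv f (U x ^ 2) * U x ^ 2 + f (U x ^ 2) := by
    simpa [mul_assoc, Pi.mul_def, Pi.add_def] using (continuous_const.mul hd_cont).add hBf_cont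
  have hu_cont : Continuous fun x : Esp N => (w x).re :=
    Complex.continuous_re.comp w.continuous
  have hv_cont : Continuous fun x : Esp N => (w x).im :=
    Complex.continuous_im.comp w.continuous
  -- boundedness facts
  obtain ⟨Cw, hCw⟩ := schwartz_bdd w
  have hCw0 : 0 ≤ Cw := le_trans (norm_nonneg _) (hCw 0)
  have hM0 : 0 ≤ M := le_trans (abs_nonneg _) (hM 0).1
  have hu_bdd : ∀ x, |(w x).re| ≤ Cw :=
    fun x => le_trans (Complex.abs_re_le_norm _) (by simpa using hCw x)
  have hv_bdd : ∀ x, |(w x).im| ≤ Cw :=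
    fun x => le_trans (Complex.abs_im_le_norm _) (by simpa using hCw x)
  have hA_bdd : ∀ x, |2 * deriv f (U x ^ 2) * U x ^ 2 + f (U x ^ 2)| ≤ 3 * M := by
    intro x
    refine le_trans (abs_add_le _ _) ?_
    have h1 := (hM x).1; have h2 := (hM x).2
    rw [mul_assoc, abs_mul, abs_two]
    linarith
  have hBf_bdd : ∀ x, |f (U x ^ 2)| ≤ M := fun x => (hM x).1
  -- the Laplacian of w as a Schwartz map
  have hlapc : lapC ⇑w = ⇑(∑ j, pdS j (pdS j w)) := lapC_coe w
  obtain ⟨CL, hCL'⟩ := schwartz_bdd (∑ j, pdS j (pdS j w))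
  have hCL : ∀ x, ‖lapC ⇑w x‖ ≤ CL := fun x => by rw [hlapc]; exact hCL' x
  have hlap_cont : Continuous (lapC ⇑w) := by rw [hlapc]; exact (∑ j, pdS j (pdS j w)).continuous
  -- real and imaginary parts of the Laplacian
  have hre_fun : (fun y => Complex.reCLM (w y)) = fun y : Esp N => (w y).re :=
    funext fun y => Complex.reCLM_apply _
  have him_fun : (fun y => Complex.imCLM (w y)) = fun y : Esp N => (w y).im :=
    funext fun y => Complex.imCLM_apply _
  have hlapu : lapR (fun y : Esp N => (w y).re) = fun x => (lapC ⇑w x).re := by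
    rw [← hre_fun]
    exact funext fun x => lap_L Complex.reCLM w x
  have hlapv : lapR (fun y : Esp N => (w y).im) = fun x => (lapC ⇑w x).im := by
    rw [← him_fun]
    exact funext fun x => lap_L Complex.imCLM w x
  -- Green's identities
  have hgreen_u : ∫ x, lapR (fun y : Esp N => (w y).re) x * φ x
      = ∫ x, (w x).re * lapR ⇑φ x := by
    have h := green_L Complex.reCLM
      (fun z => by simpa using Complex.abs_re_le_norm z) w φ
    rw [hre_fun] at h
    simpa using h
  have hgreen_v : ∫ x, lapR (fun y : Esp N => (w y).im) x * φ x
      = ∫ x, (w x).im * lapR ⇑φ x := by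
    have h := green_L Complex.imCLM
      (fun z => by simpa using Complex.abs_im_le_norm z) w φ
    rw [him_fun] at h
    simpa using h
  -- decomposition of the integrand into four pieces
  have hsplit : (fun x : Esp N => (Complex.I * (c : ℂ) * (lapC ⇑w x + ((ω : ℝ) : ℂ) * w x
        - ((2 * deriv f (U x ^ 2) * U x ^ 2 + f (U x ^ 2) : ℝ) : ℂ) * (((w x).re : ℝ) : ℂ)
        - Complex.I * ((f (U x ^ 2) : ℝ) : ℂ) * (((w x).im : ℝ) : ℂ)))
        * (ζ * ((φ x : ℝ) : ℂ)))
      = fun x : Esp N =>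
        (Complex.I * ζ * (c : ℂ) * lapC ⇑w x) * ((φ x : ℝ) : ℂ)
        + (Complex.I * ζ * (c : ℂ) * ((ω : ℝ) : ℂ) * w x) * ((φ x : ℝ) : ℂ)
        + (Complex.I * ζ * ((-(c * ((2 * deriv f (U x ^ 2) * U x ^ 2 + f (U x ^ 2))
              * (w x).re)) : ℝ) : ℂ)) * ((φ x : ℝ) : ℂ)
        + (ζ * ((c * (f (U x ^ 2) * (w x).im) : ℝ) : ℂ)) * ((φ x : ℝ) : ℂ) := by
    funext x
    push_cast
    ring_nf
    rw [Complex.I_sq]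
    ring
  -- integrability of the four pieces
  have iT1 : Integrable (fun x : Esp N =>
      (Complex.I * ζ * (c : ℂ) * lapC ⇑w x) * ((φ x : ℝ) : ℂ)) volume := by
    refine integrable_bdd_mul_C ((continuous_const.mul hlap_cont).aestronglyMeasurable)
      (C := ‖Complex.I * ζ * (c : ℂ)‖ * CL) (fun x => ?_) φ
    rw [Pi.mul_apply, norm_mul]
    exact mul_le_mul_of_nonneg_left (hCL x) (norm_nonneg _)
  have iT2 : Integrable (fun x : Esp N =>
      (Complex.I * ζ * (c : ℂ) * ((ω : ℝ) : ℂ) * w x) * ((φ x : ℝ) : ℂ)) volume := by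
    refine integrable_bdd_mul_C ((continuous_const.mul w.continuous).aestronglyMeasurable)
      (C := ‖Complex.I * ζ * (c : ℂ) * ((ω : ℝ) : ℂ)‖ * Cw) (fun x => ?_) φ
    rw [Pi.mul_apply, norm_mul]
    exact mul_le_mul_of_nonneg_left (hCw x) (norm_nonneg _)
  have iT3 : Integrable (fun x : Esp N =>
      (Complex.I * ζ * ((-(c * ((2 * deriv f (U x ^ 2) * U x ^ 2 + f (U x ^ 2))
          * (w x).re)) : ℝ) : ℂ)) * ((φ x : ℝ) : ℂ)) volume := by
    refine integrable_bdd_mul_C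
      ((continuous_const.mul (Complex.continuous_ofReal.comp
        ((continuous_const.mul ((hA_cont.mul hu_cont))).neg))).aestronglyMeasurable)
      (C := ‖Complex.I * ζ‖ * (|c| * (3 * M * Cw))) (fun x => ?_) φ
    rw [Pi.mul_apply, norm_mul]
    refine mul_le_mul_of_nonneg_left ?_ (norm_nonneg _)
    simp only [Function.comp_apply, Pi.mul_apply, Pi.neg_apply]
    rw [Complex.norm_real, Real.norm_eq_abs, abs_neg, abs_mul]
    refine mul_le_mul_of_nonneg_left ?_ (abs_nonneg c)
    rw [abs_mul]
    exact mul_le_mul (hA_bdd x) (hu_bdd x) (abs_nonneg _) (by positivity)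
  have iT4 : Integrable (fun x : Esp N =>
      (ζ * ((c * (f (U x ^ 2) * (w x).im) : ℝ) : ℂ)) * ((φ x : ℝ) : ℂ)) volume := by
    refine integrable_bdd_mul_C
      ((continuous_const.mul (Complex.continuous_ofReal.comp
        (continuous_const.mul (hBf_cont.mul hv_cont)))).aestronglyMeasurable)
      (C := ‖ζ‖ * (|c| * (M * Cw))) (fun x => ?_) φ
    rw [Pi.mul_apply, norm_mul]
    refine mul_le_mul_of_nonneg_left ?_ (norm_nonneg _)
    simp only [Function.comp_apply, Pi.mul_apply]
    rw [Complex.norm_real, Real.norm_eq_abs, abs_mul]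
    refine mul_le_mul_of_nonneg_left ?_ (abs_nonneg c)
    rw [abs_mul]
    exact mul_le_mul (hBf_bdd x) (hv_bdd x) (abs_nonneg _) hM0
  -- split the integral
  have iT12 : Integrable (fun x : Esp N =>
      (Complex.I * ζ * (c : ℂ) * lapC ⇑w x) * ((φ x : ℝ) : ℂ)
      + (Complex.I * ζ * (c : ℂ) * ((ω : ℝ) : ℂ) * w x) * ((φ x : ℝ) : ℂ)) volume :=
    iT1.add iT2
  have iT123 : Integrable (fun x : Esp N =>
      (Complex.I * ζ * (c : ℂ) * lapC ⇑w x) * ((φ x : ℝ) : ℂ)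
      + (Complex.I * ζ * (c : ℂ) * ((ω : ℝ) : ℂ) * w x) * ((φ x : ℝ) : ℂ)
      + (Complex.I * ζ * ((-(c * ((2 * deriv f (U x ^ 2) * U x ^ 2 + f (U x ^ 2))
            * (w x).re)) : ℝ) : ℂ)) * ((φ x : ℝ) : ℂ)) volume :=
    iT12.add iT3
  rw [hsplit, integral_add iT123 iT4, integral_add iT12 iT3, integral_add iT1 iT2]
  simp only [Complex.add_im]
  rw [im_integral iT1, im_integral iT2, im_integral iT3, im_integral iT4]
  -- constants
  have hξre : (Complex.I * ζ * (c : ℂ)).re = c * p := by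
    simp [Complex.mul_re, Complex.mul_im, hq, hp]; ring
  have hξim : (Complex.I * ζ * (c : ℂ)).im = c * q := by
    simp [Complex.mul_re, Complex.mul_im, hq, hp]; ring
  have hηre : (Complex.I * ζ * (c : ℂ) * ((ω : ℝ) : ℂ)).re = c * ω * p := by
    simp [Complex.mul_re, Complex.mul_im, hq, hp]; ring
  have hηim : (Complex.I * ζ * (c : ℂ) * ((ω : ℝ) : ℂ)).im = c * ω * q := by
    simp [Complex.mul_re, Complex.mul_im, hq, hp]; ring
  have hIζim : (Complex.I * ζ).im = q := by
    simp [Complex.mul_im, hq]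
  -- pointwise imaginary parts
  have e1 : (fun x : Esp N =>
      ((Complex.I * ζ * (c : ℂ) * lapC ⇑w x) * ((φ x : ℝ) : ℂ)).im)
      = fun x => c * p * (lapR (fun y : Esp N => (w y).im) x * φ x)
        + c * q * (lapR (fun y : Esp N => (w y).re) x * φ x) := by
    funext x
    rw [mul_ofReal_im, Complex.mul_im, hξre, hξim, hlapu, hlapv]
    ring
  have e2 : (fun x : Esp N =>
      ((Complex.I * ζ * (c : ℂ) * ((ω : ℝ) : ℂ) * w x) * ((φ x : ℝ) : ℂ)).im)
      = fun x => c * ω * p * ((w x).im * φ x) + c * ω * q * ((w x).re * φ x) := by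
    funext x
    rw [mul_ofReal_im, Complex.mul_im, hηre, hηim]
    ring
  have e3 : (fun x : Esp N =>
      ((Complex.I * ζ * ((-(c * ((2 * deriv f (U x ^ 2) * U x ^ 2 + f (U x ^ 2))
          * (w x).re)) : ℝ) : ℂ)) * ((φ x : ℝ) : ℂ)).im)
      = fun x => (-(c * q)) * (((2 * deriv f (U x ^ 2) * U x ^ 2 + f (U x ^ 2))
          * (w x).re) * φ x) := by
    funext x
    rw [mul_ofReal_im, mul_ofReal_im, hIζim]
    ring
  have e4 : (fun x : Esp N =>
      ((ζ * ((c * (f (U x ^ 2) * (w x).im) : ℝ) : ℂ)) * ((φ x : ℝ) : ℂ)).im)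
      = fun x => (-(c * p)) * ((f (U x ^ 2) * (w x).im) * φ x) := by
    funext x
    rw [mul_ofReal_im, mul_ofReal_im, hp]
    ring
  rw [e1, e2, e3, e4]
  -- integrability of the real pieces
  have ilapv : Integrable (fun x : Esp N => lapR (fun y : Esp N => (w y).im) x * φ x) volume := by
    rw [hlapv]
    refine integrable_bdd_mul (Complex.continuous_im.comp hlap_cont).aestronglyMeasurable
      (C := CL) (fun x => le_trans (Complex.abs_im_le_norm _)
        (by simpa using hCL x)) φ
  have ilapu : Integrable (fun x : Esp N => lapR (fun y : Esp N => (w y).re) x * φ x) volume := by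
    rw [hlapu]
    refine integrable_bdd_mul (Complex.continuous_re.comp hlap_cont).aestronglyMeasurable
      (C := CL) (fun x => le_trans (Complex.abs_re_le_norm _)
        (by simpa using hCL x)) φ
  have iv : Integrable (fun x : Esp N => (w x).im * φ x) volume :=
    integrable_bdd_mul hv_cont.aestronglyMeasurable hv_bdd φ
  have iu : Integrable (fun x : Esp N => (w x).re * φ x) volume :=
    integrable_bdd_mul hu_cont.aestronglyMeasurable hu_bdd φ
  -- evaluate the four real integrals
  rw [integral_add ((ilapv.const_mul _)) ((ilapu.const_mul _)),
    integral_add ((iv.const_mul _)) ((iu.const_mul _))]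
  rw [integral_const_mul, integral_const_mul, integral_const_mul, integral_const_mul,
    integral_const_mul, integral_const_mul]
  rw [hgreen_u, hgreen_v]
  ring
end MasterLemma
section Claims

variable {N : ℕ}

lemma claim1 (c ω : ℝ) (f : ℝ → ℝ) (hf : ContDiffOn ℝ 1 f (Set.Ioi 0))
    (U : SchwartzMap (Esp N) ℝ) (hUpos : ∀ x, 0 < U x)
    (hell : ∀ x, -lapR ⇑U x + f (U x ^ 2) * U x - ω * U x = 0)
    (M : ℝ) (hM : ∀ x, |f (U x ^ 2)| ≤ M ∧ |deriv f (U x ^ 2) * U x ^ 2| ≤ M)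
    (w : SchwartzMap (Esp N) ℂ) (j : Fin N) :
    symp (fun x : Esp N =>
        Complex.I * ((c : ℝ) : ℂ)
          * (lapC (⇑w) x + ((ω : ℝ) : ℂ) * w x
            - ((2 * deriv f (U x ^ 2) * U x ^ 2 + f (U x ^ 2) : ℝ) : ℂ)
                * (((w x).re : ℝ) : ℂ)
            - Complex.I * ((f (U x ^ 2) : ℝ) : ℂ) * (((w x).im : ℝ) : ℂ)))
      (zA0 ⇑U j) = 0 := by
  have hz : ∀ x : Esp N,
      (starRingEnd ℂ) (zA0 ⇑U j x) = (-1 : ℂ) * ((pdS j U x : ℝ) : ℂ) := by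
    intro x
    have hc := congrFun (pd_coe j U) x
    simp only [zA0, map_neg, Complex.conj_ofReal, hc]
    ring
  simp only [symp, hz]
  rw [master c ω 0 (-1) f hf U hUpos M hM w (pdS j U) (-1) (by simp) (by simp)]
  -- kernel property of L₊
  have hLφ : ∀ x : Esp N, lapR ⇑(pdS j U) x
      = (2 * deriv f (U x ^ 2) * U x ^ 2 + f (U x ^ 2) - ω) * pdS j U x := by
    intro x
    have h := Lplus_eq f hf ω U hUpos hell j x
    rw [pd_coe] at h
    exact h
  have hGu : (fun x : Esp N => (w x).re * lapR ⇑(pdS j U) x)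
      = fun x : Esp N => ((2 * deriv f (U x ^ 2) * U x ^ 2 + f (U x ^ 2)) * (w x).re)
          * pdS j U x - ω * ((w x).re * pdS j U x) :=
    funext fun x => by rw [hLφ x]; ring
  rw [hGu]
  -- integrability
  have hU2 : ∀ x : Esp N, U x ^ 2 ∈ Set.Ioi (0:ℝ) :=
    fun x => Set.mem_Ioi.mpr (pow_pos (hUpos x) 2)
  have hBf_cont : Continuous fun x : Esp N => f (U x ^ 2) :=
    hf.continuousOn.comp_continuous (U.continuous.pow 2) hU2
  have hd_cont : Continuous fun x : Esp N => deriv f (U x ^ 2) * U x ^ 2 :=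
    ((hf.continuousOn_deriv_of_isOpen isOpen_Ioi le_rfl).comp_continuous
      (U.continuous.pow 2) hU2).mul (U.continuous.pow 2)
  have hA_cont : Continuous fun x : Esp N =>
      2 * deriv f (U x ^ 2) * U x ^ 2 + f (U x ^ 2) := by
    simpa [mul_assoc, Pi.mul_def, Pi.add_def] using (continuous_const.mul hd_cont).add hBf_cont
  have hu_cont : Continuous fun x : Esp N => (w x).re :=
    Complex.continuous_re.comp w.continuous
  obtain ⟨Cw, hCw⟩ := schwartz_bdd w
  have hM0 : 0 ≤ M := le_trans (abs_nonneg _) (hM 0).1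
  have hu_bdd : ∀ x, |(w x).re| ≤ Cw :=
    fun x => le_trans (Complex.abs_re_le_norm _) (by simpa using hCw x)
  have hA_bdd : ∀ x, |2 * deriv f (U x ^ 2) * U x ^ 2 + f (U x ^ 2)| ≤ 3 * M := by
    intro x
    refine le_trans (abs_add_le _ _) ?_
    have h1 := (hM x).1; have h2 := (hM x).2
    rw [mul_assoc, abs_mul, abs_two]
    linarith
  have iKA : Integrable (fun x : Esp N =>
      ((2 * deriv f (U x ^ 2) * U x ^ 2 + f (U x ^ 2)) * (w x).re) * pdS j U x) volume := by
    refine integrable_bdd_mul ((hA_cont.mul hu_cont).aestronglyMeasurable)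
      (C := 3 * M * Cw) (fun x => ?_) (pdS j U)
    rw [Pi.mul_apply, abs_mul]
    exact mul_le_mul (hA_bdd x) (hu_bdd x) (abs_nonneg _) (by positivity)
  have iu : Integrable (fun x : Esp N => (w x).re * pdS j U x) volume :=
    integrable_bdd_mul hu_cont.aestronglyMeasurable hu_bdd (pdS j U)
  rw [integral_sub iKA (iu.const_mul ω), integral_const_mul]
  ring

lemma claim3 (c ω : ℝ) (f : ℝ → ℝ) (hf : ContDiffOn ℝ 1 f (Set.Ioi 0))
    (U : SchwartzMap (Esp N) ℝ) (hUpos : ∀ x, 0 < U x)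
    (hell : ∀ x, -lapR ⇑U x + f (U x ^ 2) * U x - ω * U x = 0)
    (M : ℝ) (hM : ∀ x, |f (U x ^ 2)| ≤ M ∧ |deriv f (U x ^ 2) * U x ^ 2| ≤ M)
    (w : SchwartzMap (Esp N) ℂ) :
    symp (fun x : Esp N =>
        Complex.I * ((c : ℝ) : ℂ)
          * (lapC (⇑w) x + ((ω : ℝ) : ℂ) * w x
            - ((2 * deriv f (U x ^ 2) * U x ^ 2 + f (U x ^ 2) : ℝ) : ℂ)
                * (((w x).re : ℝ) : ℂ)
            - Complex.I * ((f (U x ^ 2) : ℝ) : ℂ) * (((w x).im : ℝ) : ℂ)))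
      (zTh0 ⇑U) = 0 := by
  have hz : ∀ x : Esp N,
      (starRingEnd ℂ) (zTh0 ⇑U x) = (-Complex.I) * ((U x : ℝ) : ℂ) := by
    intro x
    simp [zTh0, Complex.conj_ofReal]
  simp only [symp, hz]
  rw [master c ω 1 0 f hf U hUpos M hM w U (-Complex.I) (by simp) (by simp)]
  have hGv : (fun x : Esp N => (w x).im * lapR ⇑U x)
      = fun x : Esp N => (f (U x ^ 2) * (w x).im) * U x - ω * ((w x).im * U x) :=
    funext fun x => by
      have h := hell x
      rw [show lapR ⇑U x = f (U x ^ 2) * U x - ω * U x by linarith]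
      ring
  rw [hGv]
  have hU2 : ∀ x : Esp N, U x ^ 2 ∈ Set.Ioi (0:ℝ) :=
    fun x => Set.mem_Ioi.mpr (pow_pos (hUpos x) 2)
  have hBf_cont : Continuous fun x : Esp N => f (U x ^ 2) :=
    hf.continuousOn.comp_continuous (U.continuous.pow 2) hU2
  have hv_cont : Continuous fun x : Esp N => (w x).im :=
    Complex.continuous_im.comp w.continuous
  obtain ⟨Cw, hCw⟩ := schwartz_bdd w
  have hM0 : 0 ≤ M := le_trans (abs_nonneg _) (hM 0).1
  have hv_bdd : ∀ x, |(w x).im| ≤ Cw :=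
    fun x => le_trans (Complex.abs_im_le_norm _) (by simpa using hCw x)
  have iKB : Integrable (fun x : Esp N => (f (U x ^ 2) * (w x).im) * U x) volume := by
    refine integrable_bdd_mul ((hBf_cont.mul hv_cont).aestronglyMeasurable)
      (C := M * Cw) (fun x => ?_) U
    rw [Pi.mul_apply, abs_mul]
    exact mul_le_mul ((hM x).1) (hv_bdd x) (abs_nonneg _) hM0
  have iv : Integrable (fun x : Esp N => (w x).im * U x) volume :=
    integrable_bdd_mul hv_cont.aestronglyMeasurable hv_bdd U
  rw [integral_sub iKB (iv.const_mul ω), integral_const_mul]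
  ring

lemma claim2 (c ω : ℝ) (f : ℝ → ℝ) (hf : ContDiffOn ℝ 1 f (Set.Ioi 0))
    (U : SchwartzMap (Esp N) ℝ) (hUpos : ∀ x, 0 < U x)
    (hell : ∀ x, -lapR ⇑U x + f (U x ^ 2) * U x - ω * U x = 0)
    (M : ℝ) (hM : ∀ x, |f (U x ^ 2)| ≤ M ∧ |deriv f (U x ^ 2) * U x ^ 2| ≤ M)
    (w : SchwartzMap (Esp N) ℂ) (j : Fin N) :
    symp (fun x : Esp N =>
        Complex.I * ((c : ℝ) : ℂ)
          * (lapC (⇑w) x + ((ω : ℝ) : ℂ) * w x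
            - ((2 * deriv f (U x ^ 2) * U x ^ 2 + f (U x ^ 2) : ℝ) : ℂ)
                * (((w x).re : ℝ) : ℂ)
            - Complex.I * ((f (U x ^ 2) : ℝ) : ℂ) * (((w x).im : ℝ) : ℂ)))
      (zXi0 ⇑U j) = -c * symp ⇑w (zA0 ⇑U j) := by
  have hz : ∀ x : Esp N, (starRingEnd ℂ) (zXi0 ⇑U j x)
      = (-(Complex.I / 2)) * ((coordMul j U x : ℝ) : ℂ) := by
    intro x
    simp only [zXi0, map_mul, map_div₀, Complex.conj_I, Complex.conj_ofReal, map_ofNat,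
      coordMul_apply]
    push_cast
    ring
  simp only [symp, hz]
  rw [master c ω (1/2) 0 f hf U hUpos M hM w (coordMul j U) (-(Complex.I / 2))
    (by simp) (by simp [Complex.div_im])]
  -- Laplacian identity for the weighted profile
  have hLφ : ∀ x : Esp N, lapR ⇑(coordMul j U) x
      = f (U x ^ 2) * coordMul j U x - ω * coordMul j U x + 2 * pdS j U x := by
    intro x
    have h := lap_coordMul U j x
    have h2 := hell x
    have h3 : lapR ⇑U x = f (U x ^ 2) * U x - ω * U x := by linarith
    rw [h, h3, coordMul_apply]
    have hc := congrFun (pd_coe j U) x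
    rw [hc]
    ring
  have hGv : (fun x : Esp N => (w x).im * lapR ⇑(coordMul j U) x)
      = fun x : Esp N => (f (U x ^ 2) * (w x).im) * coordMul j U x
          - ω * ((w x).im * coordMul j U x) + 2 * ((w x).im * pdS j U x) :=
    funext fun x => by rw [hLφ x]; ring
  rw [hGv]
  -- integrability
  have hU2 : ∀ x : Esp N, U x ^ 2 ∈ Set.Ioi (0:ℝ) :=
    fun x => Set.mem_Ioi.mpr (pow_pos (hUpos x) 2)
  have hBf_cont : Continuous fun x : Esp N => f (U x ^ 2) :=
    hf.continuousOn.comp_continuous (U.continuous.pow 2) hU2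
  have hv_cont : Continuous fun x : Esp N => (w x).im :=
    Complex.continuous_im.comp w.continuous
  obtain ⟨Cw, hCw⟩ := schwartz_bdd w
  have hM0 : 0 ≤ M := le_trans (abs_nonneg _) (hM 0).1
  have hv_bdd : ∀ x, |(w x).im| ≤ Cw :=
    fun x => le_trans (Complex.abs_im_le_norm _) (by simpa using hCw x)
  have iKB : Integrable (fun x : Esp N => (f (U x ^ 2) * (w x).im) * coordMul j U x) volume := by
    refine integrable_bdd_mul ((hBf_cont.mul hv_cont).aestronglyMeasurable)
      (C := M * Cw) (fun x => ?_) (coordMul j U)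
    rw [Pi.mul_apply, abs_mul]
    exact mul_le_mul ((hM x).1) (hv_bdd x) (abs_nonneg _) hM0
  have iv : Integrable (fun x : Esp N => (w x).im * coordMul j U x) volume :=
    integrable_bdd_mul hv_cont.aestronglyMeasurable hv_bdd (coordMul j U)
  have ivpd : Integrable (fun x : Esp N => (w x).im * pdS j U x) volume :=
    integrable_bdd_mul hv_cont.aestronglyMeasurable hv_bdd (pdS j U)
  have isub : Integrable (fun x : Esp N => (f (U x ^ 2) * (w x).im) * coordMul j U x
      - ω * ((w x).im * coordMul j U x)) volume := iKB.sub (iv.const_mul ω)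
  rw [integral_add isub (ivpd.const_mul 2), integral_sub iKB (iv.const_mul ω),
    integral_const_mul, integral_const_mul]
  -- the right-hand side pairing
  have hz2 : ∀ x : Esp N,
      (starRingEnd ℂ) (zA0 ⇑U j x) = (-1 : ℂ) * ((pdS j U x : ℝ) : ℂ) := by
    intro x
    have hc := congrFun (pd_coe j U) x
    simp only [zA0, map_neg, Complex.conj_ofReal, hc]
    ring
  have hWfun : (fun x : Esp N => w x * (-1 : ℂ) * ((pdS j U x : ℝ) : ℂ))
      = fun x : Esp N => (-(w x)) * ((pdS j U x : ℝ) : ℂ) := funext fun x => by ring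
  have iW : Integrable (fun x : Esp N => (-(w x)) * ((pdS j U x : ℝ) : ℂ)) volume := by
    refine integrable_bdd_mul_C (w.continuous.neg.aestronglyMeasurable)
      (C := Cw) (fun x => ?_) (pdS j U)
    rw [Pi.neg_apply, norm_neg]
    exact hCw x
  have hsymp : (∫ x, w x * (starRingEnd ℂ) (zA0 ⇑U j x)).im
      = -1 * ∫ x, (w x).im * pdS j U x := by
    simp only [hz2, ← mul_assoc]
    rw [hWfun, im_integral iW]
    have : (fun x : Esp N => ((-(w x)) * ((pdS j U x : ℝ) : ℂ)).im)
        = fun x : Esp N => (-1 : ℝ) * ((w x).im * pdS j U x) := by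
      funext x
      rw [mul_ofReal_im]
      simp
    rw [this, integral_const_mul]
  rw [hsymp]
  ring

end Claims
/-- Lemma `i3`: pairings of `I₃` (the linearized operator term) with the
rescaled tangent vectors. -/
theorem lemma_I3
    (N : ℕ) (hN : 3 ≤ N) (ε β ω : ℝ) (hε : 0 < ε)
    (f : ℝ → ℝ) (hf : ContDiffOn ℝ 1 f (Set.Ioi 0))
    (U : SchwartzMap (Esp N) ℝ) (hUpos : ∀ x, 0 < U x)
    (hell : ∀ x, -lapR ⇑U x + f (U x ^ 2) * U x - ω * U x = 0)
    (hb : ∃ M, ∀ x, |f (U x ^ 2)| ≤ M ∧ |deriv f (U x ^ 2) * U x ^ 2| ≤ M)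
    (w : SchwartzMap (Esp N) ℂ) :
    (∀ j : Fin N,
        symp (fun x : Esp N =>
            Complex.I * ((ε ^ (1 - 2 * β) : ℝ) : ℂ)
              * (lapC (⇑w) x + ((ω : ℝ) : ℂ) * w x
                - ((2 * deriv f (U x ^ 2) * U x ^ 2 + f (U x ^ 2) : ℝ) : ℂ)
                    * (((w x).re : ℝ) : ℂ)
                - Complex.I * ((f (U x ^ 2) : ℝ) : ℂ) * (((w x).im : ℝ) : ℂ)))
          (zA0 ⇑U j) = 0) ∧
    (∀ j : Fin N,
        symp (fun x : Esp N =>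
            Complex.I * ((ε ^ (1 - 2 * β) : ℝ) : ℂ)
              * (lapC (⇑w) x + ((ω : ℝ) : ℂ) * w x
                - ((2 * deriv f (U x ^ 2) * U x ^ 2 + f (U x ^ 2) : ℝ) : ℂ)
                    * (((w x).re : ℝ) : ℂ)
                - Complex.I * ((f (U x ^ 2) : ℝ) : ℂ) * (((w x).im : ℝ) : ℂ)))
          (zXi0 ⇑U j) = -(ε ^ (1 - 2 * β)) * symp (⇑w) (zA0 ⇑U j)) ∧
    symp (fun x : Esp N =>
        Complex.I * ((ε ^ (1 - 2 * β) : ℝ) : ℂ)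
          * (lapC (⇑w) x + ((ω : ℝ) : ℂ) * w x
            - ((2 * deriv f (U x ^ 2) * U x ^ 2 + f (U x ^ 2) : ℝ) : ℂ)
                * (((w x).re : ℝ) : ℂ)
            - Complex.I * ((f (U x ^ 2) : ℝ) : ℂ) * (((w x).im : ℝ) : ℂ)))
      (zTh0 ⇑U) = 0 := by
  obtain ⟨M, hM⟩ := hb
  exact ⟨fun j => claim1 (ε ^ (1 - 2 * β)) ω f hf U hUpos hell M hM w j,
         fun j => claim2 (ε ^ (1 - 2 * β)) ω f hf U hUpos hell M hM w j,
         claim3 (ε ^ (1 - 2 * β)) ω f hf U hUpos hell M hM w⟩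
end NLS
end
end
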